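/- arXiv:2502.02823 — 5 statements merged into one kernel-verified Lean document; each statement's English description precedes it below -/
import Mathlib

section
/- Let 0 ≤ β < 1 and let f = h + conj(g) ∈ G̃⁰_H(β). Then for every z ∈ 𝔻 with |z| = r, β·r + (1−β)·r·(1−r)/(1+r) ≤ |f(z)| ≤ β·r + (1−β)·r·(1+r)/(1−r). -/
set_option maxRecDepth 8000
set_option maxHeartbeats 1000000

open Metric Complex

noncomputable def Complex.abs : AbsoluteValue ℂ ℝ where
  toFun z := ‖z‖
  map_mul' := norm_mul
  nonneg' := norm_nonneg
  eq_zero' _ := norm_eq_zero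
  add_le' := norm_add_le

lemma Complex.norm_eq_abs (z : ℂ) : ‖z‖ = Complex.abs z := rfl

lemma Complex.abs_apply (z : ℂ) : Complex.abs z = Real.sqrt (Complex.normSq z) :=
  Complex.norm_def z

lemma Complex.abs_ofReal (x : ℝ) : Complex.abs (x : ℂ) = |x| := by
  rw [← Complex.norm_eq_abs]; simp

lemma Complex.abs_conj (z : ℂ) : Complex.abs ((starRingEnd ℂ) z) = Complex.abs z :=
  Complex.norm_conj z

lemma Complex.abs_re_le_abs (z : ℂ) : |z.re| ≤ Complex.abs z := Complex.abs_re_le_norm z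

lemma Complex.re_le_abs (z : ℂ) : z.re ≤ Complex.abs z := Complex.re_le_norm z

lemma Complex.sq_abs (z : ℂ) : Complex.abs z ^ 2 = Complex.normSq z := Complex.sq_norm z

lemma Complex.normSq_eq_abs (z : ℂ) : Complex.normSq z = Complex.abs z ^ 2 :=
  Complex.normSq_eq_norm_sq z

private lemma aux_hasFPS (a : ℕ → ℂ) (h : ℂ → ℂ)
    (hh : ∀ z ∈ Metric.ball (0:ℂ) 1, HasSum (fun n : ℕ => a n * z ^ n) (h z)) :
    HasFPowerSeriesOnBall h (FormalMultilinearSeries.ofScalars ℂ a) 0 1 := by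
  constructor
  · apply ENNReal.le_of_forall_nnreal_lt
    intro r hr
    have hr1 : (r : ℝ) < 1 := by exact_mod_cast hr
    have hz : ((r:ℝ) : ℂ) ∈ Metric.ball (0:ℂ) 1 := by
      simp [Complex.abs_ofReal, _root_.abs_of_nonneg r.coe_nonneg, hr1]
    have hsum : Summable (fun n : ℕ => a n * ((r:ℝ):ℂ) ^ n) := (hh _ hz).summable
    have hnorm : Summable (fun n : ℕ => ‖FormalMultilinearSeries.ofScalars ℂ a n‖ * (r:ℝ) ^ n) := by
      have := summable_norm_iff.mpr hsum
      have hcoeff : ∀ n, (FormalMultilinearSeries.ofScalars ℂ a).coeff n = a n := by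
        intro n
        show (FormalMultilinearSeries.ofScalars ℂ a) n (fun _ => 1) = a n
        rw [FormalMultilinearSeries.ofScalars_apply_eq]; simp
      simpa [FormalMultilinearSeries.ofScalars_norm, hcoeff, norm_mul, norm_pow,
        _root_.abs_of_nonneg r.coe_nonneg] using this
    exact (FormalMultilinearSeries.ofScalars ℂ a).le_radius_of_summable_norm hnorm
  · exact one_pos
  · intro y hy
    have hy' : y ∈ Metric.ball (0:ℂ) 1 := by
      rw [Metric.mem_ball, dist_zero_right, ← ENNReal.ofReal_lt_one, ofReal_norm]
      simpa using hy
    have hcoeff : ∀ n, (FormalMultilinearSeries.ofScalars ℂ a).coeff n = a n := by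
      intro n
      show (FormalMultilinearSeries.ofScalars ℂ a) n (fun _ => 1) = a n
      rw [FormalMultilinearSeries.ofScalars_apply_eq]; simp
    simpa [FormalMultilinearSeries.ofScalars_apply_eq, hcoeff, smul_eq_mul, mul_comm] using hh y hy'

private lemma key_ineq {F : ℂ → ℂ} {β : ℝ} (hβ1 : β < 1)
    (hd : DifferentiableOn ℂ F (Metric.ball 0 1)) (hF0 : F 0 = 0) (hF1 : deriv F 0 = 1)
    (hre : ∀ w ∈ Metric.ball (0:ℂ) 1, w ≠ 0 → β < (F w / w).re)
    {z : ℂ} (hz : z ∈ Metric.ball (0:ℂ) 1) (hz0 : z ≠ 0) :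
    Complex.abs (F z / z - 1) ≤ Complex.abs z * Complex.abs (F z / z + 1 - 2 * (β : ℂ)) := by
  set s : ℂ → ℂ := dslope F 0 with hs_def
  have hmem0 : Metric.ball (0:ℂ) 1 ∈ nhds (0:ℂ) := Metric.isOpen_ball.mem_nhds (by simp)
  have hs_d : DifferentiableOn ℂ s (Metric.ball 0 1) :=
    (Complex.differentiableOn_dslope hmem0).mpr hd
  have hs0 : s 0 = 1 := by rw [hs_def, dslope_same]; exact hF1
  have hsz : ∀ w : ℂ, w ≠ 0 → s w = F w / w := by
    intro w hw
    rw [hs_def, dslope_of_ne _ hw, slope_def_field, hF0, sub_zero, sub_zero, div_eq_div_iff] <;>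
      simp [hw]
  have hsre : ∀ w ∈ Metric.ball (0:ℂ) 1, β < (s w).re := by
    intro w hw
    rcases eq_or_ne w 0 with rfl | hw0
    · rw [hs0]; simpa using hβ1
    · rw [hsz w hw0]; exact hre w hw hw0
  have hdenom : ∀ w ∈ Metric.ball (0:ℂ) 1, s w + (1 - 2 * (β:ℂ)) ≠ 0 := by
    intro w hw H
    have : (s w + (1 - 2 * (β:ℂ))).re = 0 := by rw [H]; simp
    simp only [Complex.add_re, Complex.sub_re, Complex.one_re, Complex.mul_re,
      Complex.ofReal_re, Complex.ofReal_im, Complex.re_ofNat, Complex.im_ofNat] at this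
    have := hsre w hw
    nlinarith
  set ω : ℂ → ℂ := fun w => (s w - 1) / (s w + (1 - 2 * (β:ℂ))) with hω_def
  have hωd : DifferentiableOn ℂ ω (Metric.ball 0 1) :=
    (hs_d.sub_const 1).div (hs_d.add_const _) hdenom
  have hω0 : ω 0 = 0 := by simp [hω_def, hs0]
  have hnumlt : ∀ w ∈ Metric.ball (0:ℂ) 1,
      Complex.abs (s w - 1) < Complex.abs (s w + (1 - 2 * (β:ℂ))) := by
    intro w hw
    have hx := hsre w hw
    rw [Complex.abs_apply, Complex.abs_apply]
    apply Real.sqrt_lt_sqrt (Complex.normSq_nonneg _)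
    simp only [Complex.normSq_apply, Complex.sub_re, Complex.add_re, Complex.sub_im,
      Complex.add_im, Complex.one_re, Complex.one_im, Complex.mul_re, Complex.mul_im,
      Complex.ofReal_re, Complex.ofReal_im, Complex.re_ofNat, Complex.im_ofNat]
    nlinarith
  have hmaps : Set.MapsTo ω (Metric.ball 0 1) (Metric.ball 0 1) := by
    intro w hw
    rw [Metric.mem_ball, dist_zero_right]
    have hpos : 0 < Complex.abs (s w + (1 - 2 * (β:ℂ))) :=
      AbsoluteValue.pos _ (hdenom w hw)
    rw [Complex.norm_eq_abs, hω_def]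
    rw [map_div₀, div_lt_one hpos]
    exact hnumlt w hw
  have habs : Complex.abs z < 1 := by simpa [Complex.norm_eq_abs] using Metric.mem_ball.mp hz
  have hschwarz : Complex.abs (ω z) ≤ Complex.abs z :=
    norm_le_norm_of_mapsTo_ball hωd (hmaps.mono_right Metric.ball_subset_closedBall) hω0 habs
  have hpos : 0 < Complex.abs (s z + (1 - 2 * (β:ℂ))) := AbsoluteValue.pos _ (hdenom z hz)
  have : Complex.abs (s z - 1) ≤ Complex.abs z * Complex.abs (s z + (1 - 2 * (β:ℂ))) := by
    have := hschwarz
    rw [hω_def, map_div₀, div_le_iff₀ hpos] at this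
    simpa using this
  have heq : s z = F z / z := hsz z hz0
  rw [heq] at this
  have e1 : F z / z + 1 - 2 * (β:ℂ) = F z / z + (1 - 2 * (β:ℂ)) := by ring
  rw [e1]
  exact this

private lemma sq_of_abs {w : ℂ} {r β : ℝ} (hr : 0 ≤ r)
    (hw : Complex.abs (w - 1) ≤ r * Complex.abs (w + 1 - 2 * (β:ℂ))) :
    (w.re - 1)^2 + w.im^2 ≤ r^2 * ((w.re + 1 - 2*β)^2 + w.im^2) := by
  have h1 : (Complex.abs (w - 1))^2 ≤ (r * Complex.abs (w + 1 - 2 * (β:ℂ)))^2 :=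
    pow_le_pow_left₀ (AbsoluteValue.nonneg _ _) hw 2
  rw [mul_pow, Complex.sq_abs, Complex.sq_abs] at h1
  simpa [Complex.normSq_apply, Complex.sub_re, Complex.add_re, Complex.sub_im, Complex.add_im,
    Complex.one_re, Complex.one_im, Complex.mul_re, Complex.mul_im, Complex.ofReal_re,
    Complex.ofReal_im, Complex.re_ofNat, Complex.im_ofNat, pow_two] using h1

theorem stmt_0
    (β : ℝ) (hβ0 : 0 ≤ β) (hβ1 : β < 1)
    (h g : ℂ → ℂ) (a b : ℕ → ℂ)
    (ha0 : a 0 = 0) (ha1 : a 1 = 1) (hb0 : b 0 = 0) (hb1 : b 1 = 0)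
    (hh : ∀ z ∈ Metric.ball (0:ℂ) 1, HasSum (fun n : ℕ => a n * z ^ n) (h z))
    (hg : ∀ z ∈ Metric.ball (0:ℂ) 1, HasSum (fun n : ℕ => b n * z ^ n) (g z))
    (hmem : ∀ z ∈ Metric.ball (0:ℂ) 1, z ≠ 0 →
      ‖g z / z‖ < (h z / z - (β:ℂ)).re) :
    ∀ z ∈ Metric.ball (0:ℂ) 1,
      β * ‖z‖ +
          (1 - β) * ‖z‖ * (1 - ‖z‖) / (1 + ‖z‖)
        ≤ ‖h z + (starRingEnd ℂ) (g z)‖ ∧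
      ‖h z + (starRingEnd ℂ) (g z)‖
        ≤ β * ‖z‖ +
            (1 - β) * ‖z‖ * (1 + ‖z‖) / (1 - ‖z‖) := by
  simp only [Complex.norm_eq_abs] at hmem ⊢
  have hFh := aux_hasFPS a h hh
  have hFg := aux_hasFPS b g hg
  have hball : Metric.eball (0:ℂ) 1 = Metric.ball (0:ℂ) 1 := by
    have h1 : (1:ENNReal) = ((1:NNReal):ENNReal) := by norm_num
    rw [h1, Metric.emetric_ball_nnreal]
    norm_num
  have hdh : DifferentiableOn ℂ h (Metric.ball 0 1) := hball ▸ hFh.differentiableOn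
  have hdg : DifferentiableOn ℂ g (Metric.ball 0 1) := hball ▸ hFg.differentiableOn
  have hderivh : deriv h 0 = 1 := by
    rw [hFh.hasFPowerSeriesAt.deriv]
    show (FormalMultilinearSeries.ofScalars ℂ a) 1 (fun _ => 1) = 1
    rw [FormalMultilinearSeries.ofScalars_apply_eq]; simp [ha1]
  have hderivg : deriv g 0 = 0 := by
    rw [hFg.hasFPowerSeriesAt.deriv]
    show (FormalMultilinearSeries.ofScalars ℂ b) 1 (fun _ => 1) = 0
    rw [FormalMultilinearSeries.ofScalars_apply_eq]; simp [hb1]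
  have hmem0 : Metric.ball (0:ℂ) 1 ∈ nhds (0:ℂ) := Metric.isOpen_ball.mem_nhds (by simp)
  have h0 : h 0 = 0 := by
    have h1 : HasSum (fun n : ℕ => a n * (0:ℂ) ^ n) (h 0) := hh 0 (by simp)
    have h2 : HasSum (fun n : ℕ => a n * (0:ℂ) ^ n) (a 0 * (0:ℂ) ^ 0) :=
      hasSum_single 0 (fun n hn => by simp [zero_pow hn])
    have := h1.unique h2
    simpa [ha0] using this
  have g0 : g 0 = 0 := by
    have h1 : HasSum (fun n : ℕ => b n * (0:ℂ) ^ n) (g 0) := hg 0 (by simp)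
    have h2 : HasSum (fun n : ℕ => b n * (0:ℂ) ^ n) (b 0 * (0:ℂ) ^ 0) :=
      hasSum_single 0 (fun n hn => by simp [zero_pow hn])
    have := h1.unique h2
    simpa [hb0] using this
  intro z hz
  rcases eq_or_ne z 0 with rfl | hz0
  · simp [h0, g0]
  obtain ⟨r, hr_def⟩ : ∃ r : ℝ, Complex.abs z = r := ⟨_, rfl⟩
  rw [hr_def]
  have hr0 : 0 < r := hr_def ▸ AbsoluteValue.pos _ hz0
  have hr1 : r < 1 := by
    have := Metric.mem_ball.mp hz
    rw [dist_zero_right, Complex.norm_eq_abs, hr_def] at this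
    exact this
  obtain ⟨p, hp_def⟩ : ∃ p : ℂ, h z / z = p := ⟨_, rfl⟩
  obtain ⟨q, hq_def⟩ : ∃ q : ℂ, g z / z = q := ⟨_, rfl⟩
  have hqre : Complex.abs q < p.re - β := by
    have := hmem z hz hz0
    rw [hp_def, hq_def] at this
    simpa [Complex.sub_re, Complex.ofReal_re] using this
  have hpre : 0 < p.re := by
    have := AbsoluteValue.nonneg Complex.abs q
    linarith
  have hp0 : p ≠ 0 := fun H => by simp [H] at hpre
  have habsh : Complex.abs (h z) = r * Complex.abs p := by
    rw [← hp_def, map_div₀, hr_def]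
    field_simp
  have habsg : Complex.abs (g z) = r * Complex.abs q := by
    rw [← hq_def, map_div₀, hr_def]
    field_simp
  -- main inequality for any unimodular ε
  have main : ∀ ε : ℂ, Complex.abs ε = 1 →
      Complex.abs ((p + ε * q) - 1) ≤ r * Complex.abs ((p + ε * q) + 1 - 2 * (β:ℂ)) ∧
      β < (p + ε * q).re := by
    intro ε hε
    have hFd : DifferentiableOn ℂ (fun w => h w + ε * g w) (Metric.ball 0 1) :=
      hdh.add (hdg.const_mul ε)
    have hF0 : (fun w => h w + ε * g w) 0 = 0 := by simp [h0, g0]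
    have dh0 : DifferentiableAt ℂ h 0 := hdh.differentiableAt hmem0
    have dg0 : DifferentiableAt ℂ g 0 := hdg.differentiableAt hmem0
    have hF1 : deriv (fun w => h w + ε * g w) 0 = 1 := by
      rw [deriv_fun_add dh0 (dg0.const_mul ε), deriv_const_mul ε dg0, hderivh, hderivg,
        mul_zero, add_zero]
    have hFre : ∀ w ∈ Metric.ball (0:ℂ) 1, w ≠ 0 → β < ((fun w => h w + ε * g w) w / w).re := by
      intro w hw hw0
      have hm := hmem w hw hw0
      rw [Complex.sub_re, Complex.ofReal_re] at hm
      have hsplit : (h w + ε * g w) / w = h w / w + ε * (g w / w) := by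
        field_simp
      show β < ((h w + ε * g w) / w).re
      rw [hsplit, Complex.add_re]
      have hre2 : -(Complex.abs (g w / w)) ≤ (ε * (g w / w)).re := by
        have h1 : |(ε * (g w / w)).re| ≤ Complex.abs (ε * (g w / w)) :=
          Complex.abs_re_le_abs _
        rw [map_mul, hε, one_mul] at h1
        have h2 := neg_abs_le ((ε * (g w / w)).re)
        linarith
      linarith
    have hkey := key_ineq hβ1 hFd hF0 hF1 hFre hz hz0
    have hFz : (h z + ε * g z) / z = p + ε * q := by
      rw [← hp_def, ← hq_def]
      field_simp
    rw [hFz] at hkey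
    have hkey2 := hFre z hz hz0
    rw [hFz] at hkey2
    rw [hr_def] at hkey
    exact ⟨by convert hkey using 3 <;> ring, hkey2⟩
  have h1r : 0 < 1 - r := by linarith
  have h1pr : 0 < 1 + r := by linarith
  constructor
  · -- lower bound
    set ε : ℂ := if q = 0 then 1 else -(starRingEnd ℂ q) / ((Complex.abs q : ℝ) : ℂ) with hε_def
    have hε : Complex.abs ε = 1 := by
      rw [hε_def]
      split_ifs with hq
      · simp
      · rw [map_div₀, Complex.abs.map_neg, Complex.abs_conj, Complex.abs_ofReal,
          _root_.abs_of_nonneg (AbsoluteValue.nonneg _ _),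
          div_self (AbsoluteValue.ne_zero _ hq)]
    obtain ⟨hineq, hβlt⟩ := main ε hε
    have hεq : ε * q = ((-(Complex.abs q) : ℝ) : ℂ) := by
      rw [hε_def]
      split_ifs with hq
      · simp [hq]
      · have hconj : starRingEnd ℂ q * q = (((Complex.abs q)^2 : ℝ) : ℂ) := by
          rw [mul_comm, Complex.mul_conj, Complex.normSq_eq_abs]
          try (push_cast; ring)
        have haq : ((Complex.abs q : ℝ) : ℂ) ≠ 0 := by
          simpa using (AbsoluteValue.ne_zero Complex.abs hq)
        rw [div_mul_eq_mul_div, neg_mul, hconj, div_eq_iff haq]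
        push_cast
        try ring
    have hwre : (p + ε * q).re = p.re - Complex.abs q := by
      rw [hεq, Complex.add_re, Complex.ofReal_re]; ring
    have hsq := sq_of_abs hr0.le hineq
    obtain ⟨x, hx_def⟩ : ∃ x : ℝ, (p + ε * q).re = x := ⟨_, rfl⟩
    obtain ⟨y, hy_def⟩ : ∃ y : ℝ, (p + ε * q).im = y := ⟨_, rfl⟩
    rw [hx_def, hy_def] at hsq
    rw [hx_def] at hβlt hwre
    have hfac : ((1+r)*x - (1 - r*(1-2*β))) * ((1-r)*x - (1 + r*(1-2*β))) ≤ 0 := by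
      nlinarith [hsq, sq_nonneg y, mul_nonneg (mul_nonneg h1r.le h1pr.le) (sq_nonneg y)]
    have hxlb : 1 - r*(1-2*β) ≤ (1+r)*x := by
      by_contra hcon
      push_neg at hcon
      have hf1 : (1+r)*x - (1 - r*(1-2*β)) < 0 := by linarith
      have hf2 : 0 ≤ (1-r)*x - (1 + r*(1-2*β)) := by
        by_contra hk
        push_neg at hk
        have hpp := mul_pos (by linarith : 0 < -((1+r)*x - (1 - r*(1-2*β))))
          (by linarith : 0 < -((1-r)*x - (1 + r*(1-2*β))))
        nlinarith [hfac]
      have hx0 : 0 ≤ x := le_of_lt (lt_of_le_of_lt hβ0 hβlt)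
      have h5 : (1 + r*(1-2*β))*(1+r) ≤ ((1-r)*x)*(1+r) :=
        mul_le_mul_of_nonneg_right (by linarith) h1pr.le
      have h6 : ((1+r)*x)*(1-r) < (1 - r*(1-2*β))*(1-r) :=
        mul_lt_mul_of_pos_right (by linarith) h1r
      nlinarith [h5, h6, mul_pos hr0 (by linarith : (0:ℝ) < 2 - 2*β)]
    have habsf : r * x ≤ Complex.abs (h z + (starRingEnd ℂ) (g z)) := by
      have hn : Complex.abs (h z) - Complex.abs (g z) ≤
          Complex.abs (h z + (starRingEnd ℂ) (g z)) := by
        have := norm_sub_norm_le (h z) (-((starRingEnd ℂ) (g z)))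
        simp only [sub_neg_eq_add, norm_neg] at this
        simpa [Complex.norm_eq_abs, Complex.abs_conj] using this
      have hxle : x ≤ Complex.abs p - Complex.abs q := by
        rw [hwre]
        linarith [Complex.re_le_abs p]
      calc r * x ≤ r * (Complex.abs p - Complex.abs q) :=
            mul_le_mul_of_nonneg_left hxle hr0.le
        _ = Complex.abs (h z) - Complex.abs (g z) := by rw [habsh, habsg]; ring
        _ ≤ _ := hn
    have hLHS : β * r + (1 - β) * r * (1 - r) / (1 + r) = r * ((1 - r*(1-2*β))/(1+r)) := by
      field_simp; ring
    rw [hLHS]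
    refine le_trans ?_ habsf
    apply mul_le_mul_of_nonneg_left _ hr0.le
    rw [div_le_iff₀ h1pr]
    linarith [hxlb]
  · -- upper bound
    set ε : ℂ := if q = 0 then 1 else
      p * (starRingEnd ℂ q) / (((Complex.abs p : ℝ) : ℂ) * ((Complex.abs q : ℝ) : ℂ)) with hε_def
    have hε : Complex.abs ε = 1 := by
      rw [hε_def]
      split_ifs with hq
      · simp
      · rw [map_div₀, map_mul, map_mul, Complex.abs_conj, Complex.abs_ofReal, Complex.abs_ofReal,
          _root_.abs_of_nonneg (AbsoluteValue.nonneg _ _),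
          _root_.abs_of_nonneg (AbsoluteValue.nonneg _ _),
          div_self ((mul_pos (Complex.abs.pos hp0) (Complex.abs.pos hq)).ne')]
    obtain ⟨hineq, hβlt⟩ := main ε hε
    have habsw : Complex.abs (p + ε * q) = Complex.abs p + Complex.abs q := by
      rw [hε_def]
      split_ifs with hq
      · simp [hq]
      · have hconj : starRingEnd ℂ q * q = (((Complex.abs q)^2 : ℝ) : ℂ) := by
          rw [mul_comm, Complex.mul_conj, Complex.normSq_eq_abs]
          try (push_cast; ring)
        have hap : ((Complex.abs p : ℝ) : ℂ) ≠ 0 := by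
          simpa using (AbsoluteValue.ne_zero Complex.abs hp0)
        have haq : ((Complex.abs q : ℝ) : ℂ) ≠ 0 := by
          simpa using (AbsoluteValue.ne_zero Complex.abs hq)
        have hpa : Complex.abs p ≠ 0 := AbsoluteValue.ne_zero Complex.abs hp0
        have hεq : p * (starRingEnd ℂ q) /
            (((Complex.abs p : ℝ) : ℂ) * ((Complex.abs q : ℝ) : ℂ)) * q
            = p * (((Complex.abs q / Complex.abs p : ℝ)) : ℂ) := by
          rw [div_mul_eq_mul_div, mul_assoc p _ q, hconj,
            div_eq_iff (mul_ne_zero hap haq)]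
          push_cast
          field_simp
        have heq : p + p * (starRingEnd ℂ q) /
            (((Complex.abs p : ℝ) : ℂ) * ((Complex.abs q : ℝ) : ℂ)) * q
            = p * ((((1 + Complex.abs q / Complex.abs p) : ℝ)) : ℂ) := by
          rw [hεq]
          push_cast
          ring
        rw [heq, map_mul, Complex.abs_ofReal, _root_.abs_of_nonneg (by positivity)]
        field_simp
    have hsq := sq_of_abs hr0.le hineq
    obtain ⟨x, hx_def⟩ : ∃ x : ℝ, (p + ε * q).re = x := ⟨_, rfl⟩
    obtain ⟨y, hy_def⟩ : ∃ y : ℝ, (p + ε * q).im = y := ⟨_, rfl⟩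
    obtain ⟨m, hm_def⟩ : ∃ m : ℝ, Complex.abs (p + ε * q) = m := ⟨_, rfl⟩
    rw [hx_def, hy_def] at hsq
    rw [hx_def] at hβlt
    have hxm : x ≤ m := by rw [← hx_def, ← hm_def]; exact Complex.re_le_abs _
    have hm0 : 0 ≤ m := hm_def ▸ AbsoluteValue.nonneg _ _
    have hm2 : m^2 = x^2 + y^2 := by
      rw [← hm_def, Complex.sq_abs, Complex.normSq_apply, ← hx_def, ← hy_def]
      ring
    have hfac : ((1+r)*m - (1 - r*(1-2*β))) * ((1-r)*m - (1 + r*(1-2*β))) ≤ 0 := by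
      nlinarith [hsq, hm2, hxm, sq_nonneg y,
        mul_le_mul_of_nonneg_left hxm (by nlinarith : (0:ℝ) ≤ 2*(1 + r^2*(1-2*β)))]
    have hmub : (1-r)*m ≤ 1 + r*(1-2*β) := by
      by_contra hcon
      push_neg at hcon
      have hf2 : 0 < (1-r)*m - (1 + r*(1-2*β)) := by linarith
      have hf1 : (1+r)*m - (1 - r*(1-2*β)) ≤ 0 := by
        by_contra hk
        push_neg at hk
        have := mul_pos hk hf2
        nlinarith [hfac]
      have h5 : (1 + r*(1-2*β))*(1+r) < ((1-r)*m)*(1+r) :=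
        mul_lt_mul_of_pos_right hcon h1pr
      have h6 : ((1+r)*m)*(1-r) ≤ (1 - r*(1-2*β))*(1-r) :=
        mul_le_mul_of_nonneg_right (by linarith) h1r.le
      nlinarith [h5, h6, mul_pos hr0 (by linarith : (0:ℝ) < 2 - 2*β)]
    have habsf : Complex.abs (h z + (starRingEnd ℂ) (g z)) ≤ r * m := by
      calc Complex.abs (h z + (starRingEnd ℂ) (g z))
          ≤ Complex.abs (h z) + Complex.abs ((starRingEnd ℂ) (g z)) :=
            AbsoluteValue.add_le _ _ _
        _ = r * (Complex.abs p + Complex.abs q) := by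
            rw [Complex.abs_conj, habsh, habsg]; ring
        _ = r * m := by rw [← hm_def, habsw]
    have hRHS : β * r + (1 - β) * r * (1 + r) / (1 - r) = r * ((1 + r*(1-2*β))/(1-r)) := by
      field_simp; ring
    rw [hRHS]
    refine le_trans habsf ?_
    apply mul_le_mul_of_nonneg_left _ hr0.le
    rw [le_div_iff₀ h1r]
    linarith [hmub]
end

section
/- Let 0 ≤ β < 1 and define f(z) = z + 2(1−β) Σ_{n≥2} z^n = z + 2(1−β) z²/(1−z) (so g ≡ 0). Then f ∈ G̃⁰_H(β), and for every real r with 0 < r < 1 one has |f(r)| = β·r + (1−β)·r·(1+r)/(1−r); that is, the upper growth bound for the class G̃⁰_H(β) is attained by f. -/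
/- Sharpness of the growth theorem for G̃⁰_H(β):
   f(z) = z + 2(1-β) Σ_{n≥2} z^n = z + 2(1-β) z²/(1-z) (with g ≡ 0)
   belongs to G̃⁰_H(β) and attains the upper growth bound at every real r ∈ (0,1). -/
theorem stmt_1
    (β : ℝ) (hβ0 : 0 ≤ β) (hβ1 : β < 1)
    (f : ℂ → ℂ) (hf : ∀ z : ℂ, f z = z + 2 * (1 - (β:ℂ)) * z ^ 2 / (1 - z)) :
    (∀ z ∈ Metric.ball (0:ℂ) 1,
      HasSum (fun n : ℕ => 2 * (1 - (β:ℂ)) * z ^ (n + 2)) (f z - z)) ∧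
    (∀ z ∈ Metric.ball (0:ℂ) 1, z ≠ 0 →
      ‖(0:ℂ) / z‖ < (f z / z - (β:ℂ)).re) ∧
    (∀ r : ℝ, 0 < r → r < 1 →
      ‖f (r:ℂ)‖ = β * r + (1 - β) * r * (1 + r) / (1 - r)) := by
  refine ⟨?_, ?_, ?_⟩
  · intro z hz
    rw [Metric.mem_ball, Complex.dist_eq, sub_zero] at hz
    have hz1 : (1 : ℂ) - z ≠ 0 := by
      intro h
      have : z = 1 := by linear_combination -h
      simp [this] at hz
    have hgeo : HasSum (fun n : ℕ => z ^ n) (1 - z)⁻¹ :=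
      hasSum_geometric_of_norm_lt_one (by simpa using hz)
    have := hgeo.mul_left (2 * (1 - (β:ℂ)) * z ^ 2)
    have heq : f z - z = 2 * (1 - (β:ℂ)) * z ^ 2 * (1 - z)⁻¹ := by
      rw [hf]; field_simp; ring
    rw [heq]
    convert this using 2 with n
    · rfl
    ring
  · intro z hz hz0
    rw [Metric.mem_ball, Complex.dist_eq, sub_zero] at hz
    have hz1 : (1 : ℂ) - z ≠ 0 := by
      intro h
      have : z = 1 := by linear_combination -h
      simp [this] at hz
    have key : f z / z - (β:ℂ) = ((1 - (β:ℂ)) * (1 + z)) / (1 - z) := by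
      rw [hf]; field_simp; ring
    have hns : 0 < Complex.normSq (1 - z) := by
      rwa [Complex.normSq_pos]
    have hzn : Complex.normSq z < 1 := by
      have := Complex.sq_norm z
      nlinarith [norm_nonneg z]
    rw [zero_div, norm_zero, key, Complex.div_re]
    have hexp : ((1 - (β:ℂ)) * (1 + z)).re * (1 - z).re / Complex.normSq (1 - z) +
        ((1 - (β:ℂ)) * (1 + z)).im * (1 - z).im / Complex.normSq (1 - z)
        = (1 - β) * (1 - Complex.normSq z) / Complex.normSq (1 - z) := by
      rw [← add_div]
      congr 1
      simp [Complex.mul_re, Complex.mul_im, Complex.normSq_apply, Complex.sub_re,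
        Complex.sub_im, Complex.add_re, Complex.add_im]
      ring
    rw [hexp]
    exact div_pos (by nlinarith) hns
  · intro r hr0 hr1
    have hr1' : (1 : ℂ) - (r:ℂ) ≠ 0 := by
      intro h
      have : (r:ℂ) = 1 := by linear_combination -h
      have : r = 1 := by exact_mod_cast this
      linarith
    have hre : f (r:ℂ) = ((β * r + (1 - β) * r * (1 + r) / (1 - r) : ℝ) : ℂ) := by
      rw [hf]
      have h1r : (1:ℝ) - r ≠ 0 := by intro h; linarith
      push_cast
      field_simp
      ring
    rw [hre, Complex.norm_real, Real.norm_eq_abs, abs_of_nonneg]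
    have h1r : (0:ℝ) < 1 - r := by linarith
    have : 0 ≤ (1 - β) * r * (1 + r) / (1 - r) := by
      apply div_nonneg (by nlinarith [mul_pos hr0 (by linarith : (0:ℝ) < 1 + r)]) (le_of_lt h1r)
    nlinarith
end

section
/- Let 0 ≤ β < 1 and let f = h + conj(g) ∈ G̃⁰_H(β), with coefficients a_n, b_n (n ≥ 2). Then for every n ≥ 2, |a_n| + |b_n| ≤ 2(1−β). -/
set_option maxHeartbeats 1000000
open MeasureTheory Real Complex Filter

local notation "conj'" => starRingEnd ℂ

/-- auxiliary exponential -/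
noncomputable def EE (m : ℤ) (θ : ℝ) : ℂ := Complex.exp ((m : ℂ) * (θ : ℂ) * Complex.I)

lemma EE_cont (m : ℤ) : Continuous (EE m) := by
  unfold EE; fun_prop

lemma int_exp (m : ℤ) : ∫ θ in (0:ℝ)..(2*π), EE m θ
    = if m = 0 then (2*π : ℂ) else 0 := by
  unfold EE
  rcases eq_or_ne m 0 with hm | hm
  · simp [hm, Complex.ofReal_mul]
  · have hc : (m : ℂ) * Complex.I ≠ 0 := by
      simp [Complex.I_ne_zero, Int.cast_eq_zero, hm]
    have : ∀ θ : ℝ, (m : ℂ) * θ * Complex.I = ((m : ℂ) * Complex.I) * θ := by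
      intro θ; ring
    simp_rw [this]
    rw [integral_exp_mul_complex hc]
    simp [hm]
    have : (m:ℂ) * Complex.I * (2*(π:ℂ)) = (m:ℂ) * (2*(π:ℂ)*Complex.I) := by ring
    rw [this, Complex.exp_int_mul_two_pi_mul_I]
    simp

lemma normEE (m : ℤ) (θ : ℝ) : ‖EE m θ‖ = 1 := by
  unfold EE
  have : (m:ℂ) * θ * Complex.I = ((m * θ : ℝ) : ℂ) * Complex.I := by push_cast; ring
  rw [this, Complex.norm_exp_ofReal_mul_I]

/-- Key integral computation. -/
lemma coeff_integral (c : ℕ → ℂ) (F : ℂ → ℂ)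
    (hsum : ∀ z : ℂ, ‖z‖ < 1 → z ≠ 0 → HasSum (fun n => c n * z ^ n) (F z))
    (r : ℝ) (hr0 : 0 < r) (hr1 : r < 1) (k : ℕ) :
    ∫ θ in Set.Ioc 0 (2*π), ((F (r * Complex.exp (θ * Complex.I))).re : ℂ) * EE (-(k:ℤ)) θ
      = π * (c k) * (r:ℂ) ^ k + (if k = 0 then (π:ℂ) * (conj' (c 0)) else 0) := by
  set z : ℝ → ℂ := fun θ => r * Complex.exp (θ * Complex.I) with hzdef
  have hz_abs : ∀ θ, ‖z θ‖ = r := by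
    intro θ
    simp [hzdef, Complex.norm_exp_ofReal_mul_I, abs_of_pos hr0]
  have hz_ne : ∀ θ, z θ ≠ 0 := by
    intro θ
    apply mul_ne_zero
    · simpa using hr0.ne'
    · exact Complex.exp_ne_zero _
  -- summability of |c n| r^n
  set r' : ℝ := (1 + r)/2 with hr'def
  have hr'0 : 0 < r' := by positivity
  have hrr' : r < r' := by rw [hr'def]; linarith
  have hr'1 : r' < 1 := by rw [hr'def]; linarith
  have habs' : ‖((r' : ℝ) : ℂ)‖ = r' := by
    rw [Complex.norm_real, Real.norm_eq_abs, abs_of_pos hr'0]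
  have hne' : ((r' : ℝ) : ℂ) ≠ 0 := by
    simpa using hr'0.ne'
  have hs' := (hsum ((r':ℝ):ℂ) (by rw [habs']; exact hr'1) hne').summable
  have h0 : Tendsto (fun n => ‖c n * ((r':ℝ):ℂ) ^ n‖) atTop (nhds 0) := by
    simpa using hs'.tendsto_atTop_zero.norm
  obtain ⟨C, hC⟩ := h0.bddAbove_range
  have hCle : ∀ n, ‖c n * ((r':ℝ):ℂ) ^ n‖ ≤ C := fun n => hC ⟨n, rfl⟩
  have Sg : Summable (fun n : ℕ => C * (r/r')^n) :=
    (summable_geometric_of_lt_one (by positivity) (by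
        rw [div_lt_one hr'0]; exact hrr')).mul_left C
  have S : Summable (fun n => ‖c n‖ * r ^ n) := by
    refine Summable.of_nonneg_of_le (fun n => by positivity) (fun n => ?_) Sg
    have h1 : ‖c n‖ * r ^ n = ‖c n * ((r':ℝ):ℂ) ^ n‖ * (r/r')^n := by
      rw [norm_mul, norm_pow, habs', mul_assoc]
      congr 1
      rw [← mul_pow]
      congr 1
      rw [mul_comm r', div_mul_cancel₀ r hr'0.ne']
    rw [h1]
    apply mul_le_mul_of_nonneg_right (hCle n) (by positivity)
  -- the summands
  set G : ℕ → ℝ → ℂ := fun n θ =>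
    (c n * z θ ^ n + conj' (c n) * (conj' (z θ)) ^ n) / 2 * EE (-(k:ℤ)) θ with hGdef
  have hGeq : ∀ n θ, G n θ =
      (c n * (r:ℂ)^n/2) * EE ((n:ℤ) - k) θ
      + (conj' (c n) * (r:ℂ)^n/2) * EE (-((n:ℤ)+k)) θ := by
    intro n θ
    have h1 : z θ ^ n = (r:ℂ)^n * Complex.exp ((n:ℂ) * (θ * Complex.I)) := by
      rw [hzdef]
      simp only [mul_pow, ← Complex.exp_nat_mul]
    have h2 : (conj' (z θ)) ^ n = (r:ℂ)^n * Complex.exp (-((n:ℂ) * (θ * Complex.I))) := by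
      rw [hzdef]
      simp only [map_mul, Complex.conj_ofReal, ← Complex.exp_conj, map_mul, Complex.conj_I,
        mul_pow, ← Complex.exp_nat_mul]
      ring_nf
    have e1 : Complex.exp ((n:ℂ) * (θ * Complex.I)) * EE (-(k:ℤ)) θ = EE ((n:ℤ) - k) θ := by
      unfold EE
      rw [← Complex.exp_add]; congr 1; push_cast; ring
    have e2 : Complex.exp (-((n:ℂ) * (θ * Complex.I))) * EE (-(k:ℤ)) θ
        = EE (-((n:ℤ)+k)) θ := by
      unfold EE
      rw [← Complex.exp_add]; congr 1; push_cast; ring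
    rw [hGdef]
    simp only []
    rw [h1, h2, ← e1, ← e2]
    ring
  have hGcont : ∀ n, Continuous (G n) := by
    intro n
    have : G n = fun θ =>
        (c n * (r:ℂ)^n/2) * EE ((n:ℤ) - k) θ
        + (conj' (c n) * (r:ℂ)^n/2) * EE (-((n:ℤ)+k)) θ := funext (hGeq n)
    rw [this]
    exact ((continuous_const.mul (EE_cont _)).add (continuous_const.mul (EE_cont _)))
  have hGint : ∀ n, IntegrableOn (G n) (Set.Ioc 0 (2*π)) volume := fun n =>
    (hGcont n).integrableOn_Ioc
  have hGnorm : ∀ n θ, ‖G n θ‖ ≤ ‖c n‖ * r ^ n := by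
    intro n θ
    rw [hGdef]
    simp only []
    rw [norm_mul, normEE, mul_one, norm_div]
    have hb1 : ‖c n * z θ ^ n‖ = ‖c n‖ * r ^ n := by
      rw [norm_mul, norm_pow, hz_abs]
    have hb2 : ‖conj' (c n) * (conj' (z θ)) ^ n‖ = ‖c n‖ * r ^ n := by
      rw [norm_mul, norm_pow, RCLike.norm_conj, RCLike.norm_conj,
        hz_abs]
    calc ‖c n * z θ ^ n + conj' (c n) * (conj' (z θ)) ^ n‖ / ‖(2:ℂ)‖
        ≤ (‖c n * z θ ^ n‖ + ‖conj' (c n) * (conj' (z θ)) ^ n‖) / ‖(2:ℂ)‖ := by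
          gcongr
          exact norm_add_le _ _
      _ = ‖c n‖ * r ^ n := by
          rw [hb1, hb2]
          norm_num
  have hGsum : ∀ θ, HasSum (fun n => G n θ) (((F (z θ)).re : ℂ) * EE (-(k:ℤ)) θ) := by
    intro θ
    have H1 := hsum (z θ) (by rw [hz_abs]; exact hr1) (hz_ne θ)
    have H2 : HasSum (fun n => conj' (c n) * (conj' (z θ))^n) (conj' (F (z θ))) := by
      simpa only [Function.comp_def, map_mul, map_pow]
        using H1.map (starRingEnd ℂ) continuous_star
    have H3 := ((H1.add H2).div_const 2).mul_right (EE (-(k:ℤ)) θ)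
    have hval : (F (z θ) + conj' (F (z θ))) / 2 = ((F (z θ)).re : ℂ) := by
      rw [Complex.add_conj]
      push_cast
      ring
    rw [← hval]
    exact H3
  have hIsum : HasSum (fun n => ∫ θ in Set.Ioc 0 (2*π), G n θ)
      (∫ θ in Set.Ioc 0 (2*π), ((F (z θ)).re : ℂ) * EE (-(k:ℤ)) θ) := by
    have heq : (fun θ => ∑' n, G n θ)
        = fun θ => ((F (z θ)).re : ℂ) * EE (-(k:ℤ)) θ :=
      funext fun θ => (hGsum θ).tsum_eq
    have h := MeasureTheory.hasSum_integral_of_summable_integral_norm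
      (μ := volume.restrict (Set.Ioc 0 (2*π))) (F := G) (fun n => hGint n) ?_
    · rw [← heq]
      exact h
    · refine Summable.of_nonneg_of_le (fun n => integral_nonneg (fun θ => norm_nonneg _))
        (fun n => ?_) (S.mul_left (2*π))
      have hle : ∫ θ in Set.Ioc 0 (2*π), ‖G n θ‖
          ≤ ∫ _ in Set.Ioc 0 (2*π), ‖c n‖ * r ^ n := by
        refine setIntegral_mono_on ((hGint n).norm) ?_ measurableSet_Ioc (fun θ _ => hGnorm n θ)
        refine integrableOn_const ?_
        rw [Real.volume_Ioc]
        exact ENNReal.ofReal_ne_top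
      refine hle.trans ?_
      rw [setIntegral_const, measureReal_def, Real.volume_Ioc, smul_eq_mul, sub_zero,
        ENNReal.toReal_ofReal Real.two_pi_pos.le]
  have hIval : ∀ n, (∫ θ in Set.Ioc 0 (2*π), G n θ)
      = if n = k then (π * (c k) * (r:ℂ)^k + (if k = 0 then (π:ℂ) * conj' (c 0) else 0))
        else 0 := by
    intro n
    have hfun : (fun θ => G n θ) = fun θ =>
        (c n * (r:ℂ)^n/2) * EE ((n:ℤ) - k) θ
        + (conj' (c n) * (r:ℂ)^n/2) * EE (-((n:ℤ)+k)) θ :=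
      funext (hGeq n)
    rw [hfun, ← intervalIntegral.integral_of_le Real.two_pi_pos.le]
    rw [intervalIntegral.integral_add (f := fun θ => (c n * (r:ℂ)^n/2) * EE ((n:ℤ) - k) θ)
      (g := fun θ => (conj' (c n) * (r:ℂ)^n/2) * EE (-((n:ℤ)+k)) θ)
      ((continuous_const.mul (EE_cont _)).intervalIntegrable _ _)
      ((continuous_const.mul (EE_cont _)).intervalIntegrable _ _)]
    rw [intervalIntegral.integral_const_mul, intervalIntegral.integral_const_mul,
      int_exp, int_exp]
    rcases eq_or_ne n k with rfl | hnk
    · rcases eq_or_ne n 0 with rfl | hn0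
      · norm_num
        ring
      · have h1 : ((n:ℤ) - n = 0) := by omega
        have h2 : ¬(-((n:ℤ) + n) = 0) := by omega
        simp only [h1, if_true, if_pos rfl, if_neg h2, if_neg hn0, mul_zero, add_zero]
        push_cast
        ring
    · have h1 : ¬((n:ℤ) - k = 0) := by omega
      have h2 : ¬(-((n:ℤ) + k) = 0) := by omega
      rw [if_neg h1, if_neg h2, if_neg hnk]
      simp
  have h2 : HasSum (fun n => ∫ θ in Set.Ioc 0 (2*π), G n θ)
      (π * (c k) * (r:ℂ)^k + (if k = 0 then (π:ℂ) * conj' (c 0) else 0)) := by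
    rw [funext hIval]
    exact hasSum_ite_eq k _
  exact hIsum.unique h2

lemma core (c : ℕ → ℂ) (F : ℂ → ℂ)
    (hsum : ∀ z : ℂ, ‖z‖ < 1 → z ≠ 0 → HasSum (fun n => c n * z ^ n) (F z))
    (hpos : ∀ z : ℂ, ‖z‖ < 1 → z ≠ 0 → 0 < (F z).re)
    (k : ℕ) (hk : 1 ≤ k) : ‖c k‖ ≤ 2 * (c 0).re := by
  have key : ∀ r : ℝ, 0 < r → r < 1 → ‖c k‖ * r ^ k ≤ 2 * (c 0).re := by
    intro r hr0 hr1
    have hzabs : ∀ θ : ℝ, ‖(r:ℂ) * Complex.exp ((θ:ℂ) * Complex.I)‖ = r := by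
      intro θ
      simp [Complex.norm_exp_ofReal_mul_I, abs_of_pos hr0]
    have hzne : ∀ θ : ℝ, ((r:ℂ) * Complex.exp ((θ:ℂ) * Complex.I)) ≠ 0 := by
      intro θ
      apply mul_ne_zero
      · simpa using hr0.ne'
      · exact Complex.exp_ne_zero _
    have Jk := coeff_integral c F hsum r hr0 hr1 k
    have J0 := coeff_integral c F hsum r hr0 hr1 0
    rw [if_neg (by omega : k ≠ 0), add_zero] at Jk
    rw [if_pos rfl] at J0
    have hE0 : (fun θ : ℝ => ((F ((r:ℂ) * Complex.exp ((θ:ℂ) * Complex.I))).re : ℂ)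
          * EE (-(0:ℕ):ℤ) θ)
        = fun θ : ℝ => ((F ((r:ℂ) * Complex.exp ((θ:ℂ) * Complex.I))).re : ℂ) := by
      funext θ
      simp [EE]
    rw [hE0] at J0
    rw [show (∫ θ in Set.Ioc 0 (2*π),
        ((F ((r:ℂ) * Complex.exp ((θ:ℂ) * Complex.I))).re : ℂ))
      = ((∫ θ in Set.Ioc 0 (2*π), (F ((r:ℂ) * Complex.exp ((θ:ℂ) * Complex.I))).re : ℝ) : ℂ)
      from integral_ofReal] at J0
    have hval : (π:ℂ) * (c 0) * (r:ℂ)^0 + (π:ℂ) * conj' (c 0)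
        = ((2 * π * (c 0).re : ℝ) : ℂ) := by
      calc (π:ℂ) * (c 0) * (r:ℂ)^0 + (π:ℂ) * conj' (c 0)
          = (π:ℂ) * (c 0 + conj' (c 0)) := by ring
        _ = (π:ℂ) * ((2 * (c 0).re : ℝ) : ℂ) := by rw [Complex.add_conj]
        _ = ((2 * π * (c 0).re : ℝ) : ℂ) := by push_cast; ring
    rw [hval] at J0
    have hA : (∫ θ in Set.Ioc 0 (2*π), (F ((r:ℂ) * Complex.exp ((θ:ℂ) * Complex.I))).re)
        = 2 * π * (c 0).re := Complex.ofReal_inj.1 J0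
    have hb : ‖(π:ℂ) * (c k) * (r:ℂ)^k‖ ≤ 2 * π * (c 0).re := by
      rw [← Jk]
      calc ‖∫ θ in Set.Ioc 0 (2*π),
              ((F ((r:ℂ) * Complex.exp ((θ:ℂ) * Complex.I))).re : ℂ) * EE (-(k:ℤ)) θ‖
          ≤ ∫ θ in Set.Ioc 0 (2*π),
              ‖((F ((r:ℂ) * Complex.exp ((θ:ℂ) * Complex.I))).re : ℂ) * EE (-(k:ℤ)) θ‖ :=
            norm_integral_le_integral_norm _
        _ = ∫ θ in Set.Ioc 0 (2*π), (F ((r:ℂ) * Complex.exp ((θ:ℂ) * Complex.I))).re := by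
            congr 1
            funext θ
            rw [norm_mul, normEE, mul_one, Complex.norm_real, Real.norm_eq_abs,
              abs_of_pos (hpos _ (by rw [hzabs]; exact hr1) (hzne θ))]
        _ = 2 * π * (c 0).re := hA
    have hπ : (0:ℝ) < π := Real.pi_pos
    have habs : ‖(π:ℂ) * (c k) * (r:ℂ)^k‖
        = π * (‖c k‖ * r^k) := by
      rw [norm_mul, norm_mul, Complex.norm_real, Real.norm_eq_abs, abs_of_pos hπ, norm_pow,
        Complex.norm_real, Real.norm_eq_abs,
        abs_of_pos hr0]
      ring
    rw [habs] at hb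
    have := (mul_le_mul_iff_right₀ hπ).1 (by linarith : π * (‖c k‖ * r^k) ≤ π * (2 * (c 0).re))
    linarith
  have hlim : Tendsto (fun r : ℝ => ‖c k‖ * r ^ k) (nhdsWithin 1 (Set.Iio 1))
      (nhds (‖c k‖ * 1 ^ k)) :=
    ((continuous_const.mul (continuous_pow k)).tendsto 1).mono_left nhdsWithin_le_nhds
  have hev : ∀ᶠ r in nhdsWithin (1:ℝ) (Set.Iio 1),
      ‖c k‖ * r ^ k ≤ 2 * (c 0).re := by
    filter_upwards [Ioo_mem_nhdsLT_of_mem (show (1:ℝ) ∈ Set.Ioc 0 1 from ⟨one_pos, le_rfl⟩)]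
      with r hr
    exact key r hr.1 hr.2
  have := le_of_tendsto hlim hev
  simpa using this

/- Coefficient bound for G̃⁰_H(β): |a_n| + |b_n| ≤ 2(1-β) for all n ≥ 2. -/
theorem stmt_2
    (β : ℝ) (hβ0 : 0 ≤ β) (hβ1 : β < 1)
    (h g : ℂ → ℂ) (a b : ℕ → ℂ)
    (ha0 : a 0 = 0) (ha1 : a 1 = 1) (hb0 : b 0 = 0) (hb1 : b 1 = 0)
    (hh : ∀ z ∈ Metric.ball (0:ℂ) 1, HasSum (fun n : ℕ => a n * z ^ n) (h z))
    (hg : ∀ z ∈ Metric.ball (0:ℂ) 1, HasSum (fun n : ℕ => b n * z ^ n) (g z))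
    (hmem : ∀ z ∈ Metric.ball (0:ℂ) 1, z ≠ 0 →
      ‖g z / z‖ < (h z / z - (β:ℂ)).re) :
    ∀ n : ℕ, 2 ≤ n → ‖a n‖ + ‖b n‖ ≤ 2 * (1 - β) := by
  intro n hn
  set u : ℂ := if a n = 0 then 1 else a n / ‖a n‖ with hu
  set v : ℂ := if b n = 0 then 1 else (‖b n‖ : ℂ) / b n with hv
  set ε : ℂ := u * v with he
  have hu1 : ‖u‖ = 1 := by
    rw [hu]
    split_ifs with hx
    · simp
    · rw [norm_div, Complex.norm_real, Real.norm_eq_abs, _root_.abs_of_nonneg (norm_nonneg _),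
        div_self (norm_ne_zero_iff.mpr hx)]
  have hv1 : ‖v‖ = 1 := by
    rw [hv]
    split_ifs with hx
    · simp
    · rw [norm_div, Complex.norm_real, Real.norm_eq_abs, _root_.abs_of_nonneg (norm_nonneg _),
        div_self (norm_ne_zero_iff.mpr hx)]
  have hε1 : ‖ε‖ = 1 := by rw [he, norm_mul, hu1, hv1, mul_one]
  have hkey : ‖a n + ε * b n‖ = ‖a n‖ + ‖b n‖ := by
    rcases eq_or_ne (b n) 0 with hbn | hbn
    · simp [hbn]
    · have hvb : v * b n = (‖b n‖ : ℂ) := by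
        rw [hv, if_neg hbn, div_mul_cancel₀ _ hbn]
      have h1 : ε * b n = u * (‖b n‖ : ℂ) := by
        rw [he, mul_assoc, hvb]
      rcases eq_or_ne (a n) 0 with han | han
      · rw [h1, hu, if_pos han, one_mul, han, zero_add, Complex.norm_real, Real.norm_eq_abs,
          _root_.abs_of_nonneg (norm_nonneg _)]
        simp
      · have hane : ((‖a n‖ : ℝ) : ℂ) ≠ 0 := by
          simpa using han
        have h2 : a n + ε * b n
            = a n * (((‖a n‖ + ‖b n‖ : ℝ) : ℂ)
              / ((‖a n‖ : ℝ) : ℂ)) := by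
          rw [h1, hu, if_neg han]
          push_cast
          field_simp
        rw [h2]
        simp only [norm_mul, norm_div, Complex.norm_real, Real.norm_eq_abs]
        rw [_root_.abs_of_nonneg
            (by positivity : (0:ℝ) ≤ ‖a n‖ + ‖b n‖),
          _root_.abs_of_nonneg (norm_nonneg (a n))]
        rw [mul_div_assoc', mul_comm, mul_div_assoc,
          div_self (norm_ne_zero_iff.mpr han), mul_one]
    -- power series data
  set c : ℕ → ℂ := fun m => if m = 0 then ((1 - β : ℝ) : ℂ) else a (m+1) + ε * b (m+1) with hc
  set F : ℂ → ℂ := fun z => h z / z + ε * (g z / z) - (β:ℂ) with hF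
  have hsum' : ∀ z : ℂ, ‖z‖ < 1 → z ≠ 0 → HasSum (fun m => c m * z ^ m) (F z) := by
    intro z hz1 hz0
    have hzb : z ∈ Metric.ball (0:ℂ) 1 := by
      simpa [Metric.mem_ball, Complex.dist_eq] using hz1
    have H1 := hh z hzb
    have H2 := hg z hzb
    have H1' : HasSum (fun m => a (m+1) * z^(m+1)) (h z) := by
      refine (hasSum_nat_add_iff (f := fun m => a m * z ^ m) 1).mpr ?_
      simpa [ha0] using H1
    have H2' : HasSum (fun m => b (m+1) * z^(m+1)) (g z) := by
      refine (hasSum_nat_add_iff (f := fun m => b m * z ^ m) 1).mpr ?_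
      simpa [hb0] using H2
    have heq1 : (fun m => a (m+1) * z^(m+1) / z) = fun m => a (m+1) * z^m := by
      funext m
      rw [pow_succ, ← mul_assoc, mul_div_cancel_right₀ _ hz0]
    have heq2 : (fun m => b (m+1) * z^(m+1) / z) = fun m => b (m+1) * z^m := by
      funext m
      rw [pow_succ, ← mul_assoc, mul_div_cancel_right₀ _ hz0]
    have H1'' : HasSum (fun m => a (m+1) * z^m) (h z / z) := by
      have := H1'.div_const z
      rwa [heq1] at this
    have H2'' : HasSum (fun m => b (m+1) * z^m) (g z / z) := by
      have := H2'.div_const z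
      rwa [heq2] at this
    have H4 := (H1''.add (H2''.mul_left ε)).sub (hasSum_ite_eq 0 ((β:ℝ):ℂ))
    have hfe : (fun m => (a (m+1) * z^m + ε * (b (m+1) * z^m))
        - (if m = 0 then ((β:ℝ):ℂ) else 0)) = fun m => c m * z^m := by
      funext m
      cases m with
      | zero =>
        simp [hc, ha1, hb1]
      | succ m =>
        simp [hc]
        ring
    rw [hfe] at H4
    have : F z = h z / z + ε * (g z / z) - ((β:ℝ):ℂ) := by rw [hF]
    rw [this]
    exact H4
  have hpos' : ∀ z : ℂ, ‖z‖ < 1 → z ≠ 0 → 0 < (F z).re := by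
    intro z hz1 hz0
    have hzb : z ∈ Metric.ball (0:ℂ) 1 := by
      simpa [Metric.mem_ball, Complex.dist_eq] using hz1
    have hm := hmem z hzb hz0
    have h1 : F z = (h z / z - (β:ℂ)) + ε * (g z / z) := by rw [hF]; ring
    have h2 : -(‖ε * (g z / z)‖) ≤ (ε * (g z / z)).re := by
      have := Complex.abs_re_le_norm (ε * (g z / z))
      have := neg_abs_le ((ε * (g z / z)).re)
      cases' abs_cases ((ε * (g z / z)).re) with hh hh <;> linarith
    have h3 : ‖ε * (g z / z)‖ = ‖g z / z‖ := by
      rw [norm_mul, hε1, one_mul]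
    rw [h1, Complex.add_re]
    rw [h3] at h2
    linarith
  have hfin := core c F hsum' hpos' (n-1) (by omega)
  have hc0 : (c 0).re = 1 - β := by rw [hc]; simp
  have hn1 : n - 1 + 1 = n := by omega
  have hcn : c (n-1) = a n + ε * b n := by
    rw [hc]
    simp only []
    rw [if_neg (by omega : ¬(n - 1 = 0)), hn1]
  rw [hcn, hkey, hc0] at hfin
  exact hfin
end

section
/- Let α ≥ 0 and let f = h + conj(g) ∈ W⁰_H(α), with coefficients a_n, b_n (n ≥ 2). Then for every n ≥ 2: (i) |a_n| + |b_n| ≤ 2/(αn² + n(1−α)); (ii) ||a_n| − |b_n|| ≤ 2/(αn² + n(1−α)); (iii) |a_n| ≤ 2/(αn² + n(1−α)). -/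
open Complex Metric FormalMultilinearSeries MeasureTheory intervalIntegral Real


lemma ofScalars_coeff (c : ℕ → ℂ) (n : ℕ) :
    (FormalMultilinearSeries.ofScalars ℂ c).coeff n = c n := by
  show (ofScalars ℂ c n fun _ => (1:ℂ)) = c n
  rw [ofScalars_apply_eq]; simp

lemma lemB {c : ℕ → ℂ} {f : ℂ → ℂ}
    (hs : ∀ z ∈ Metric.ball (0:ℂ) 1, HasSum (fun n : ℕ => c n * z ^ n) (f z)) :
    HasFPowerSeriesOnBall f (ofScalars ℂ c) 0 1 := by
  constructor
  · refine ENNReal.le_of_forall_nnreal_lt fun r hr => ?_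
    have hr1 : (r : ℝ) < 1 := by exact_mod_cast hr
    have hmem : ((r : ℝ) : ℂ) ∈ Metric.ball (0:ℂ) 1 := by
      simp [Complex.norm_of_nonneg r.coe_nonneg, hr1]
    have hsum := (hs _ hmem).summable
    have htend : Filter.Tendsto (fun n : ℕ => ‖c n * ((r:ℝ):ℂ) ^ n‖) Filter.atTop (nhds 0) := by
      simpa using hsum.tendsto_atTop_zero.norm
    obtain ⟨C, hC⟩ := htend.bddAbove_range
    refine FormalMultilinearSeries.le_radius_of_bound _ C fun n => ?_
    have h1 : ‖ofScalars ℂ c n‖ * (r:ℝ) ^ n = ‖c n * ((r:ℝ):ℂ) ^ n‖ := by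
      rw [ofScalars_norm, norm_mul, norm_pow]
      simp [Complex.norm_of_nonneg r.coe_nonneg]
    rw [h1]
    exact hC ⟨n, rfl⟩
  · exact one_pos
  · intro y hy
    have hy' : y ∈ Metric.ball (0:ℂ) 1 := by
      rw [← ENNReal.coe_one, Metric.eball_coe] at hy; simpa using hy
    rw [zero_add]
    have he : (fun n : ℕ => ofScalars ℂ c n fun _ => y) = fun n : ℕ => c n * y ^ n :=
      funext fun n => by rw [ofScalars_apply_eq, smul_eq_mul]
    rw [he]
    exact hs y hy'

lemma lemD {c : ℕ → ℂ} {f : ℂ → ℂ} (hf : HasFPowerSeriesOnBall f (ofScalars ℂ c) 0 1) :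
    ∀ z ∈ Metric.ball (0:ℂ) 1,
      HasSum (fun n : ℕ => ((n:ℂ)+1) * c (n+1) * z ^ n) (deriv f z) := by
  intro z hz
  rcases eq_or_ne z 0 with rfl | hz0
  · have hd : deriv f 0 = c 1 := by
      rw [hf.hasFPowerSeriesAt.deriv]; exact ofScalars_coeff c 1
    have h0 := hasSum_single (f := fun n : ℕ => ((n:ℂ)+1) * c (n+1) * (0:ℂ) ^ n) 0
      (fun b hb => by simp [zero_pow hb])
    simpa [hd] using h0
  · have hz' : z ∈ Metric.eball (0:ℂ) 1 := by
      rw [← ENNReal.coe_one, Metric.eball_coe]; simpa using hz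
    have hsum := (hf.fderiv).hasSum hz'
    rw [zero_add] at hsum
    have hsum2 := hsum.mapL (ContinuousLinearMap.apply ℂ ℂ (1:ℂ))
    have hterm : ∀ n : ℕ,
        (ContinuousLinearMap.apply ℂ ℂ (1:ℂ)) ((ofScalars ℂ c).derivSeries n fun _ => z)
          = ((n:ℂ)+1) * c (n+1) * z ^ n := by
      intro n
      set L := (ofScalars ℂ c).derivSeries n fun _ => z with hL
      have hdiag := (ofScalars ℂ c).derivSeries_apply_diag n z
      have hlin : L z = z * L 1 := by
        have := L.map_smul z (1:ℂ)
        simpa using this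
      rw [← hL, hlin] at hdiag
      have happ : (ofScalars ℂ c (n+1) fun _ => z) = c (n+1) * z ^ (n+1) := by
        rw [ofScalars_apply_eq, smul_eq_mul]
      rw [happ] at hdiag
      have key : L 1 = ((n:ℂ)+1) * c (n+1) * z ^ n := by
        refine mul_left_cancel₀ hz0 ?_
        rw [hdiag, nsmul_eq_mul]
        push_cast
        ring
      exact key
    have hderiv : (ContinuousLinearMap.apply ℂ ℂ (1:ℂ)) (fderiv ℂ f z) = deriv f z := by
      simp [ContinuousLinearMap.apply_apply, fderiv_apply_one_eq_deriv]
    rw [hderiv] at hsum2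
    exact hsum2.congr_fun fun n => (hterm n).symm

lemma iiconj (f : ℝ → ℂ) (a b : ℝ) :
    (∫ x in a..b, (starRingEnd ℂ) (f x)) = (starRingEnd ℂ) (∫ x in a..b, f x) := by
  simp only [intervalIntegral, _root_.integral_conj, map_sub]

lemma iire (f : ℝ → ℂ) (a b : ℝ) (hf : IntervalIntegrable f MeasureTheory.volume a b) :
    (∫ x in a..b, (f x).re) = (∫ x in a..b, f x).re := by
  simp only [intervalIntegral, Complex.sub_re]
  rw [show ((∫ (x : ℝ) in Set.Ioc a b, f x ∂volume).re) = RCLike.re (∫ (x : ℝ) in Set.Ioc a b, f x ∂volume) from rfl,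
    show ((∫ (x : ℝ) in Set.Ioc b a, f x ∂volume).re) = RCLike.re (∫ (x : ℝ) in Set.Ioc b a, f x ∂volume) from rfl,
    ← _root_.integral_re hf.1, ← _root_.integral_re hf.2]
  rfl


lemma lemC {w : ℕ → ℂ} {F : ℂ → ℂ}
    (hs : ∀ z ∈ Metric.ball (0:ℂ) 1, HasSum (fun n : ℕ => w n * z ^ n) (F z))
    (hw0 : w 0 = 1)
    (hpos : ∀ z ∈ Metric.ball (0:ℂ) 1, 0 < (F z).re)
    {n : ℕ} (hn : 1 ≤ n) : ‖w n‖ ≤ 2 := by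
  have hball := lemB hs
  have hFd : ∀ z ∈ Metric.ball (0:ℂ) 1, DifferentiableAt ℂ F z := by
    intro z hz
    have hz' : z ∈ Metric.eball (0:ℂ) 1 := by rw [← ENNReal.coe_one, Metric.eball_coe]; simpa using hz
    exact (hball.analyticAt_of_mem hz').differentiableAt
  have key : ∀ r : ℝ, 0 < r → r < 1 → ‖w n‖ * r ^ n ≤ 2 := by
    intro r hr hr1
    set Z : ℝ → ℂ := circleMap 0 r with hZ
    have hne : ∀ θ : ℝ, Z θ ≠ 0 := fun θ => circleMap_ne_center hr.ne'
    have habsZ : ∀ θ : ℝ, ‖Z θ‖ = r := by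
      intro θ; rw [hZ, norm_circleMap_zero, abs_of_pos hr]
    have hZmem : ∀ θ : ℝ, Z θ ∈ Metric.ball (0:ℂ) 1 := by
      intro θ
      rw [Metric.mem_ball, dist_zero_right]
      show ‖Z θ‖ < 1
      rw [habsZ θ]; exact hr1
    have hFZc : Continuous fun θ => F (Z θ) := by
      have hFc : ContinuousOn F (Metric.ball (0:ℂ) 1) :=
        fun z hz => (hFd z hz).continuousAt.continuousWithinAt
      exact hFc.comp_continuous (continuous_circleMap 0 r) hZmem
    have hZcont : Continuous Z := continuous_circleMap 0 r
    set r' : NNReal := ⟨r, hr.le⟩ with hr'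
    have hdOn : DifferentiableOn ℂ F (Metric.closedBall (0:ℂ) r') := by
      intro z hz
      exact (hFd z (Metric.closedBall_subset_ball hr1 hz)).differentiableWithinAt
    have hc := hdOn.hasFPowerSeriesOnBall (by exact_mod_cast hr)
    have huniq : ofScalars ℂ w = cauchyPowerSeries F 0 r' :=
      hball.hasFPowerSeriesAt.eq_formalMultilinearSeries hc.hasFPowerSeriesAt
    -- E1 : coefficient formula as interval integral
    have hE1 : ∀ m : ℕ, (2 * ↑π : ℂ) * w m
        = ∫ θ in (0:ℝ)..2*π, ((Z θ) ^ m)⁻¹ * F (Z θ) := by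
      intro m
      have h1 : (cauchyPowerSeries F 0 (r':ℝ)).coeff m = w m := by
        rw [← huniq]; exact ofScalars_coeff w m
      have hco : w m = (2 * ↑π * Complex.I)⁻¹ •
          ∮ z in C(0, (r':ℝ)), (1 / (z - 0)) ^ m • (z - 0)⁻¹ • F z := by
        rw [← h1]
        exact cauchyPowerSeries_apply F 0 (r':ℝ) m 1
      rw [hco]
      simp only [circleIntegral, deriv_circleMap, smul_eq_mul, sub_zero]
      have hcong : (∫ θ in (0:ℝ)..2*π,
            circleMap 0 (r':ℝ) θ * Complex.I * ((1 / circleMap 0 (r':ℝ) θ) ^ m *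
              ((circleMap 0 (r':ℝ) θ)⁻¹ * F (circleMap 0 (r':ℝ) θ))))
          = ∫ θ in (0:ℝ)..2*π, Complex.I * (((Z θ) ^ m)⁻¹ * F (Z θ)) := by
        refine intervalIntegral.integral_congr fun θ _ => ?_
        have hco2 : circleMap 0 (r':ℝ) θ = Z θ := rfl
        rw [hco2]
        have hzz : Z θ * (Z θ)⁻¹ = 1 := mul_inv_cancel₀ (hne θ)
        rw [one_div, inv_pow]
        linear_combination (Complex.I * F (Z θ) * ((Z θ)⁻¹)^m) * hzz
      rw [hcong, intervalIntegral.integral_const_mul]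
      have hπ : (π : ℂ) ≠ 0 := by exact_mod_cast Real.pi_ne_zero
      field_simp
    -- E2 : zero integral
    have hzero : (∮ z in C(0, r), z^(n-1) * F z) = 0 := by
      apply Complex.circleIntegral_eq_zero_of_differentiable_on_off_countable hr.le
        Set.countable_empty
      · exact ContinuousOn.mul (continuousOn_pow _)
          (fun z hz => (hFd z (Metric.closedBall_subset_ball hr1 hz)).continuousAt.continuousWithinAt)
      · intro z hz
        exact (differentiableAt_pow _).mul (hFd z (Metric.ball_subset_ball hr1.le hz.1))
    have hE2 : (∫ θ in (0:ℝ)..2*π, (Z θ)^n * F (Z θ)) = 0 := by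
      have hun : (∮ z in C(0, r), z^(n-1) * F z)
          = ∫ θ in (0:ℝ)..2*π, (Z θ * Complex.I) * ((Z θ)^(n-1) * F (Z θ)) := by
        simp only [circleIntegral, deriv_circleMap, smul_eq_mul]
        rfl
      rw [hun] at hzero
      have h3 : (∫ θ in (0:ℝ)..2*π, (Z θ * Complex.I) * ((Z θ)^(n-1) * F (Z θ)))
          = Complex.I * ∫ θ in (0:ℝ)..2*π, (Z θ)^n * F (Z θ) := by
        rw [← intervalIntegral.integral_const_mul]
        refine intervalIntegral.integral_congr fun θ _ => ?_
        have hpowZ : (Z θ)^n = Z θ * (Z θ)^(n-1) := by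
          conv_lhs => rw [show n = 1 + (n-1) by omega]
          rw [pow_add, pow_one]
        rw [hpowZ]; ring
      rw [h3] at hzero
      exact (mul_eq_zero.mp hzero).resolve_left Complex.I_ne_zero
    have hE2c : (∫ θ in (0:ℝ)..2*π, ((starRingEnd ℂ) (Z θ))^n * (starRingEnd ℂ) (F (Z θ))) = 0 := by
      have hcj := iiconj (fun θ => (Z θ)^n * F (Z θ)) 0 (2*π)
      rw [hE2, map_zero] at hcj
      rw [← hcj]
      refine intervalIntegral.integral_congr fun θ _ => ?_
      rw [map_mul, map_pow]
    -- conj(Z)^n = r^{2n} (Z^n)⁻¹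
    have h4 : ∀ θ : ℝ, ((starRingEnd ℂ) (Z θ))^n = ((r:ℂ)^(2*n)) * ((Z θ)^n)⁻¹ := by
      intro θ
      have hconj : (starRingEnd ℂ) (Z θ) * Z θ = ((r:ℂ)^2) := by
        rw [mul_comm, Complex.mul_conj, ← Complex.sq_norm, habsZ θ]
        push_cast; ring
      have h5 : ((starRingEnd ℂ) (Z θ))^n * (Z θ)^n = ((r:ℂ)^(2*n)) := by
        rw [← mul_pow, hconj, ← pow_mul]
      field_simp [pow_ne_zero n (hne θ)]
      rw [h5]
    -- E3
    have hE3 : (∫ θ in (0:ℝ)..2*π, ((starRingEnd ℂ) (Z θ))^n * F (Z θ))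
        = (2*↑π : ℂ) * w n * ((r:ℂ)^(2*n)) := by
      have hc2 : (∫ θ in (0:ℝ)..2*π, ((starRingEnd ℂ) (Z θ))^n * F (Z θ))
          = ∫ θ in (0:ℝ)..2*π, ((r:ℂ)^(2*n)) * (((Z θ)^n)⁻¹ * F (Z θ)) := by
        refine intervalIntegral.integral_congr fun θ _ => ?_
        rw [h4 θ]; ring
      rw [hc2, intervalIntegral.integral_const_mul, ← hE1 n]
      ring
    -- integrability
    have hconjZc : Continuous fun θ => ((starRingEnd ℂ) (Z θ))^n :=
      (Complex.continuous_conj.comp hZcont).pow n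
    have int1 : IntervalIntegrable (fun θ => ((starRingEnd ℂ) (Z θ))^n * F (Z θ))
        MeasureTheory.volume 0 (2*π) := (hconjZc.mul hFZc).intervalIntegrable _ _
    have int2 : IntervalIntegrable (fun θ => ((starRingEnd ℂ) (Z θ))^n * (starRingEnd ℂ) (F (Z θ)))
        MeasureTheory.volume 0 (2*π) :=
      (hconjZc.mul (Complex.continuous_conj.comp hFZc)).intervalIntegrable _ _
    -- E4
    have hE4 : (∫ θ in (0:ℝ)..2*π, ((starRingEnd ℂ) (Z θ))^n * (2*((F (Z θ)).re : ℂ)))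
        = (2*↑π : ℂ) * w n * ((r:ℂ)^(2*n)) := by
      have hadd := intervalIntegral.integral_add int1 int2
      rw [hE3, hE2c, add_zero] at hadd
      rw [← hadd]
      refine intervalIntegral.integral_congr fun θ _ => ?_
      rw [← mul_add, Complex.add_conj]
      push_cast
      ring
    -- norm bound
    have hintRe : IntervalIntegrable (fun θ => (F (Z θ)).re) MeasureTheory.volume 0 (2*π) :=
      (Complex.continuous_re.comp hFZc).intervalIntegrable _ _
    have hre : (∫ θ in (0:ℝ)..2*π, (F (Z θ)).re) = 2*π := by
      have h7 := iire (fun θ => F (Z θ)) 0 (2*π) (hFZc.intervalIntegrable _ _)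
      rw [h7]
      have h8 := hE1 0
      simp only [pow_zero, inv_one, one_mul] at h8
      rw [← h8, hw0, mul_one]
      simp
    have hbound : ‖(2*↑π : ℂ) * w n * ((r:ℂ)^(2*n))‖ ≤ r^n * (2*(2*π)) := by
      rw [← hE4]
      have h6 := intervalIntegral.norm_integral_le_integral_norm
        (f := fun θ => ((starRingEnd ℂ) (Z θ))^n * (2*((F (Z θ)).re : ℂ)))
        (μ := MeasureTheory.volume) (a := (0:ℝ)) (b := 2*π) (by positivity)
      refine h6.trans ?_
      have hptw : (∫ θ in (0:ℝ)..2*π, ‖((starRingEnd ℂ) (Z θ))^n * (2*((F (Z θ)).re : ℂ))‖)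
          = ∫ θ in (0:ℝ)..2*π, r^n * (2 * (F (Z θ)).re) := by
        refine intervalIntegral.integral_congr fun θ _ => ?_
        rw [norm_mul, norm_pow]
        have h9 : ‖(starRingEnd ℂ) (Z θ)‖ = r := by
          rw [Complex.norm_conj, habsZ θ]
        have h10 : ‖(2*((F (Z θ)).re : ℂ))‖ = 2 * (F (Z θ)).re := by
          rw [show (2*((F (Z θ)).re : ℂ)) = (((2 * (F (Z θ)).re : ℝ)) : ℂ) by push_cast; ring,
            Complex.norm_real, Real.norm_eq_abs, abs_of_pos (by have := hpos (Z θ) (hZmem θ); linarith)]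
        rw [h9, h10]
      rw [hptw]
      have : (∫ θ in (0:ℝ)..2*π, r^n * (2 * (F (Z θ)).re))
          = r^n * (2 * ∫ θ in (0:ℝ)..2*π, (F (Z θ)).re) := by
        rw [intervalIntegral.integral_const_mul]
        congr 1
        rw [intervalIntegral.integral_const_mul]
      rw [this, hre]
    -- conclude
    have hnorml : ‖(2*↑π : ℂ) * w n * ((r:ℂ)^(2*n))‖ = 2*π*‖w n‖*r^(2*n) := by
      rw [norm_mul, norm_mul, norm_pow]
      have : ‖(2*↑π : ℂ)‖ = 2*π := by
        rw [show (2*↑π : ℂ) = ((2*π : ℝ) : ℂ) by push_cast; ring, Complex.norm_real,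
          Real.norm_eq_abs, abs_of_pos (by positivity)]
      rw [this, Complex.norm_real, Real.norm_eq_abs, abs_of_pos hr]
    rw [hnorml] at hbound
    have hrn : 0 < r^n := pow_pos hr n
    have hr2n : r^(2*n) = r^n * r^n := by rw [two_mul, pow_add]
    rw [hr2n] at hbound
    have h2 : (2*π*(‖w n‖ * r^n)) * r^n ≤ (2*(2*π)) * r^n := by nlinarith [hbound]
    have h3 := le_of_mul_le_mul_right h2 hrn
    nlinarith [Real.pi_pos]
  -- limit r → 1⁻
  have hlim : Filter.Tendsto (fun r : ℝ => ‖w n‖ * r ^ n) (nhdsWithin 1 (Set.Iio 1))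
      (nhds (‖w n‖)) := by
    have hcont : Continuous fun r : ℝ => ‖w n‖ * r ^ n := by continuity
    have ht := hcont.tendsto 1
    simp only [one_pow, mul_one] at ht
    exact ht.mono_left nhdsWithin_le_nhds
  refine le_of_tendsto hlim ?_
  filter_upwards [Ioo_mem_nhdsLT_of_mem (show (1:ℝ) ∈ Set.Ioc 0 1 by constructor <;> norm_num)]
    with r hri
  exact key r hri.1 hri.2

-- termwise series for z ↦ deriv f z + α z * deriv (deriv f) z
lemma lemE {c : ℕ → ℂ} {f : ℂ → ℂ} (α : ℝ)
    (hs : ∀ z ∈ Metric.ball (0:ℂ) 1, HasSum (fun n : ℕ => c n * z ^ n) (f z)) :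
    ∀ z ∈ Metric.ball (0:ℂ) 1,
      HasSum (fun n : ℕ => ((n:ℂ)+1) * (1 + (α:ℂ)*n) * c (n+1) * z ^ n)
        (deriv f z + (α:ℂ) * z * deriv (deriv f) z) := by
  intro z hz
  have S1 := lemD (lemB hs) z hz
  have S2 := lemD (lemB (lemD (lemB hs))) z hz
  have S2' := S2.mul_left ((α:ℂ) * z)
  set u : ℕ → ℂ := fun m => (α:ℂ) * m * ((m:ℂ)+1) * c (m+1) * z ^ m with hu
  have hshift : (fun k : ℕ => u (k+1))
      = fun k : ℕ => (α:ℂ) * z * (((k:ℂ)+1) * ((((k+1:ℕ):ℂ)+1) * c (k+1+1)) * z ^ k) := by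
    funext k
    rw [hu]
    push_cast
    ring
  have S2'' : HasSum u ((α:ℂ) * z * deriv (deriv f) z) := by
    have := (hasSum_nat_add_iff (f := u) 1).mp (by rw [hshift]; exact S2')
    simpa [hu] using this
  have total := S1.add S2''
  refine total.congr_fun fun k => ?_
  rw [hu]
  push_cast
  ring

lemma lemKey (α : ℝ) (hα : 0 ≤ α)
    (h g : ℂ → ℂ) (a b : ℕ → ℂ)
    (ha1 : a 1 = 1) (hb1 : b 1 = 0)
    (hh : ∀ z ∈ Metric.ball (0:ℂ) 1, HasSum (fun n : ℕ => a n * z ^ n) (h z))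
    (hg : ∀ z ∈ Metric.ball (0:ℂ) 1, HasSum (fun n : ℕ => b n * z ^ n) (g z))
    (hmem : ∀ z ∈ Metric.ball (0:ℂ) 1,
      ‖deriv g z + (α:ℂ) * z * deriv (deriv g) z‖
        < (deriv h z + (α:ℂ) * z * deriv (deriv h) z).re)
    (ε : ℂ) (hε : ‖ε‖ = 1) :
    ∀ n : ℕ, 2 ≤ n →
      ‖a n + ε * b n‖ ≤ 2 / (α * (n:ℝ) ^ 2 + (n:ℝ) * (1 - α)) := by
  intro n hn
  set F : ℂ → ℂ := fun z => (deriv h z + (α:ℂ) * z * deriv (deriv h) z)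
      + ε * (deriv g z + (α:ℂ) * z * deriv (deriv g) z) with hF
  set w : ℕ → ℂ := fun m => ((m:ℂ)+1) * (1 + (α:ℂ)*m) * (a (m+1) + ε * b (m+1)) with hw
  have hFsum : ∀ z ∈ Metric.ball (0:ℂ) 1, HasSum (fun m : ℕ => w m * z ^ m) (F z) := by
    intro z hz
    have Sh := lemE α hh z hz
    have Sg := (lemE α hg z hz).mul_left ε
    have := Sh.add Sg
    refine this.congr_fun fun k => ?_
    rw [hw]
    push_cast
    ring
  have hw0 : w 0 = 1 := by
    rw [hw]
    simp [ha1, hb1]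
  have hpos : ∀ z ∈ Metric.ball (0:ℂ) 1, 0 < (F z).re := by
    intro z hz
    have h1 := hmem z hz
    rw [hF]
    simp only [Complex.add_re]
    have h2 : -(‖ε * (deriv g z + (α:ℂ) * z * deriv (deriv g) z)‖)
        ≤ (ε * (deriv g z + (α:ℂ) * z * deriv (deriv g) z)).re := by
      have := Complex.abs_re_le_norm (ε * (deriv g z + (α:ℂ) * z * deriv (deriv g) z))
      have h4 := neg_abs_le ((ε * (deriv g z + (α:ℂ) * z * deriv (deriv g) z)).re)
      linarith [abs_le.mp this]
    rw [norm_mul] at h2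
    have h3 : ‖ε‖ = 1 := by rw [hε]
    rw [h3, one_mul] at h2
    rw [Complex.add_re] at h1
    linarith
  have hm : 1 ≤ n - 1 := by omega
  have hb2 := lemC hFsum hw0 hpos hm
  set m : ℕ := n - 1 with hmm
  have hnm : n = m + 1 := by omega
  have hwm : ‖w m‖ = ((m:ℝ)+1) * (1 + α*m) * ‖a n + ε * b n‖ := by
    rw [hw, hnm]
    simp only []
    rw [norm_mul, norm_mul]
    have e1 : ‖((m:ℂ)+1)‖ = (m:ℝ)+1 := by
      rw [show ((m:ℂ)+1) = (((m:ℝ)+1 : ℝ) : ℂ) by push_cast; ring, Complex.norm_real,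
        Real.norm_eq_abs, _root_.abs_of_nonneg (by positivity)]
    have e2 : ‖(1 + (α:ℂ)*m)‖ = 1 + α*m := by
      rw [show (1 + (α:ℂ)*m) = ((1 + α*m : ℝ) : ℂ) by push_cast; ring, Complex.norm_real,
        Real.norm_eq_abs, _root_.abs_of_nonneg (by positivity)]
    rw [e1, e2]
  have hD : α * (n:ℝ) ^ 2 + (n:ℝ) * (1 - α) = ((m:ℝ)+1) * (1 + α*m) := by
    have : (n:ℝ) = (m:ℝ) + 1 := by rw [hnm]; push_cast; ring
    rw [this]
    ring
  have hDpos : 0 < ((m:ℝ)+1) * (1 + α*m) := by positivity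
  rw [hwm] at hb2
  rw [hD, le_div_iff₀ hDpos]
  nlinarith [hb2]


/- Coefficient bounds for W⁰_H(α), α ≥ 0: for n ≥ 2,
   |a_n| + |b_n| ≤ 2/(αn² + n(1-α)), ||a_n| - |b_n|| ≤ 2/(αn² + n(1-α)),
   |a_n| ≤ 2/(αn² + n(1-α)). -/
theorem stmt_7
    (α : ℝ) (hα : 0 ≤ α)
    (h g : ℂ → ℂ) (a b : ℕ → ℂ)
    (ha0 : a 0 = 0) (ha1 : a 1 = 1) (hb0 : b 0 = 0) (hb1 : b 1 = 0)
    (hh : ∀ z ∈ Metric.ball (0:ℂ) 1, HasSum (fun n : ℕ => a n * z ^ n) (h z))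
    (hg : ∀ z ∈ Metric.ball (0:ℂ) 1, HasSum (fun n : ℕ => b n * z ^ n) (g z))
    (hmem : ∀ z ∈ Metric.ball (0:ℂ) 1,
      ‖deriv g z + (α:ℂ) * z * deriv (deriv g) z‖
        < (deriv h z + (α:ℂ) * z * deriv (deriv h) z).re) :
    ∀ n : ℕ, 2 ≤ n →
      ‖a n‖ + ‖b n‖ ≤ 2 / (α * (n:ℝ) ^ 2 + (n:ℝ) * (1 - α)) ∧
      |‖a n‖ - ‖b n‖| ≤ 2 / (α * (n:ℝ) ^ 2 + (n:ℝ) * (1 - α)) ∧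
      ‖a n‖ ≤ 2 / (α * (n:ℝ) ^ 2 + (n:ℝ) * (1 - α)) := by
  intro n hn
  set c : ℂ := a n with hc'
  set d : ℂ := b n with hd'
  set u : ℂ := if c = 0 then 1 else c / (‖c‖ : ℂ) with hu
  set v : ℂ := if d = 0 then 1 else (starRingEnd ℂ) d / (‖d‖ : ℂ) with hv
  have huu : ‖u‖ = 1 := by
    by_cases hc : c = 0
    · simp [hu, hc]
    · rw [hu, if_neg hc, norm_div, Complex.norm_real, norm_norm,
        div_self (norm_ne_zero_iff.mpr hc)]
  have hvv : ‖v‖ = 1 := by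
    by_cases hd : d = 0
    · simp [hv, hd]
    · rw [hv, if_neg hd, norm_div, Complex.norm_real, norm_norm, RCLike.norm_conj,
        div_self (norm_ne_zero_iff.mpr hd)]
  have hε : ‖u * v‖ = 1 := by rw [norm_mul, huu, hvv, mul_one]
  have hcu : c = u * (‖c‖ : ℂ) := by
    by_cases hc : c = 0
    · simp [hu, hc]
    · rw [hu, if_neg hc]
      have h2 : ((‖c‖ : ℝ) : ℂ) ≠ 0 := by
        exact_mod_cast (norm_ne_zero_iff.mpr hc)
      field_simp
  have hvd : v * d = (‖d‖ : ℂ) := by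
    by_cases hd : d = 0
    · simp [hv, hd]
    · rw [hv, if_neg hd, div_mul_eq_mul_div]
      have h1 : (starRingEnd ℂ) d * d = ((‖d‖^2 : ℝ) : ℂ) := by
        rw [mul_comm, Complex.mul_conj, Complex.normSq_eq_norm_sq]
      rw [h1]
      have h2 : ((‖d‖ : ℝ) : ℂ) ≠ 0 := by
        exact_mod_cast (norm_ne_zero_iff.mpr hd)
      push_cast
      field_simp
  have habs : ‖c + (u * v) * d‖ = ‖c‖ + ‖d‖ := by
    have key : c + (u * v) * d = u * ((‖c‖ : ℂ) + (‖d‖ : ℂ)) := by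
      rw [mul_add, ← hcu, mul_assoc, hvd]
    rw [key, norm_mul, huu, one_mul,
      show ((‖c‖:ℝ) : ℂ) + ((‖d‖:ℝ) : ℂ) = ((‖c‖ + ‖d‖ : ℝ) : ℂ) by push_cast; ring,
      Complex.norm_real, Real.norm_eq_abs, _root_.abs_of_nonneg (by positivity)]
  have main := lemKey α hα h g a b ha1 hb1 hh hg hmem (u * v) hε n hn
  rw [← hc', ← hd', habs] at main
  have hca : ‖a n‖ = ‖c‖ := by rw [hc']
  have hcb : ‖b n‖ = ‖d‖ := by rw [hd']
  have hc0 : 0 ≤ ‖c‖ := norm_nonneg c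
  have hd0 : 0 ≤ ‖d‖ := norm_nonneg d
  refine ⟨by rw [hca, hcb]; exact main, ?_, ?_⟩
  · rw [hca, hcb]
    rw [abs_le]
    constructor <;> linarith
  · rw [hca]
    linarith
end

section
/- Let k ≥ 1 be an integer, α ≥ 0, and let f = h + conj(g) ∈ G^k_H(α), with coefficients a_n, b_n (n ≥ k+1). Then for every n ≥ k+1: (i) |a_n| + |b_n| ≤ 2/(1 + (n−1)α); (ii) ||a_n| − |b_n|| ≤ 2/(1 + (n−1)α); (iii) |a_n| ≤ 2/(1 + (n−1)α). -/
open Filter Finset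

private lemma summable_aux {c : ℕ → ℂ} {r r' : ℝ}
    (hs : Summable fun m : ℕ => c m * (r' : ℂ) ^ m)
    (hr0 : 0 ≤ r) (hrr' : r < r') :
    Summable fun m : ℕ => ‖c m‖ * r ^ m := by
  have hr'0 : 0 < r' := lt_of_le_of_lt hr0 hrr'
  have hten := hs.tendsto_atTop_zero.norm
  have hbdd : BddAbove (Set.range fun m : ℕ => ‖c m * (r' : ℂ) ^ m‖) :=
    hten.bddAbove_range
  obtain ⟨C, hC⟩ := hbdd
  have hC' : ∀ m : ℕ, ‖c m‖ * r' ^ m ≤ C := by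
    intro m
    have := hC (Set.mem_range_self (f := fun m : ℕ => ‖c m * (r' : ℂ) ^ m‖) m)
    simpa [norm_mul, norm_pow, Complex.norm_real, abs_of_pos hr'0] using this
  have hgeo : Summable fun m : ℕ => C * (r / r') ^ m :=
    (summable_geometric_of_lt_one (by positivity) (by
      rw [div_lt_one hr'0]; exact hrr')).mul_left C
  refine Summable.of_nonneg_of_le (fun m => by positivity) (fun m => ?_) hgeo
  have h1 : ‖c m‖ * r ^ m = (‖c m‖ * r' ^ m) * (r / r') ^ m := by
    rw [div_pow]; field_simp
  rw [h1]
  have : (0:ℝ) ≤ (r / r') ^ m := by positivity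
  calc (‖c m‖ * r' ^ m) * (r / r') ^ m ≤ C * (r / r') ^ m := by
        exact mul_le_mul_of_nonneg_right (hC' m) this

private lemma hasSum_combo {α : ℝ} {h : ℂ → ℂ} {a : ℕ → ℂ} (ha0 : a 0 = 0)
    (hh : ∀ z ∈ Metric.ball (0:ℂ) 1, HasSum (fun n : ℕ => a n * z ^ n) (h z))
    {z : ℂ} (hz : z ∈ Metric.ball (0:ℂ) 1) (hz0 : z ≠ 0) :
    HasSum (fun m : ℕ => ((1 : ℂ) + m * α) * a (m + 1) * z ^ m)
      ((1 - (α:ℂ)) * (h z / z) + (α:ℂ) * deriv h z) := by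
  set p := FormalMultilinearSeries.ofScalars ℂ a with hp
  have happ : ∀ (y : ℂ) (n : ℕ), (p n fun _ => y) = a n * y ^ n := fun y n => by
    rw [hp, FormalMultilinearSeries.ofScalars_apply_eq, smul_eq_mul]
  have hball : ∀ y : ℂ, y ∈ Metric.eball (0:ℂ) 1 ↔ y ∈ Metric.ball (0:ℂ) 1 := by
    intro y
    rw [Metric.mem_eball, Metric.mem_ball, edist_dist, ← ENNReal.ofReal_one,
      ENNReal.ofReal_lt_ofReal_iff one_pos]
  have hradius : 1 ≤ p.radius := by
    refine ENNReal.le_of_forall_nnreal_lt (fun r hr => ?_)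
    have hr1 : (r : ℝ) < 1 := by exact_mod_cast hr
    have hr0 : (0:ℝ) ≤ r := r.coe_nonneg
    have hs : Summable fun m : ℕ => ‖a m‖ * (r:ℝ) ^ m := by
      refine summable_aux (r' := (1 + r)/2) ?_ hr0 (by linarith)
      have hmem : ((((1:ℝ) + r)/2 : ℝ) : ℂ) ∈ Metric.ball (0:ℂ) 1 := by
        rw [Metric.mem_ball, dist_zero_right, Complex.norm_real,
          Real.norm_of_nonneg (show (0:ℝ) ≤ (1 + (r:ℝ))/2 by positivity)]
        linarith
      exact (hh _ hmem).summable
    obtain ⟨C, hC⟩ := hs.tendsto_atTop_zero.bddAbove_range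
    refine p.le_radius_of_bound C (fun m => ?_)
    have := hC (Set.mem_range_self (f := fun m : ℕ => ‖a m‖ * (r:ℝ) ^ m) m)
    rw [hp, FormalMultilinearSeries.ofScalars_norm]
    exact this
  have hps : HasFPowerSeriesOnBall h p 0 1 := by
    refine ⟨hradius, one_pos, fun {y} hy => ?_⟩
    have hy' : y ∈ Metric.ball (0:ℂ) 1 := (hball y).mp hy
    rw [zero_add]
    simp only [happ]
    exact hh y hy'
  have hz' : z ∈ Metric.eball (0:ℂ) 1 := (hball z).mpr hz
  have hd0 := (hps.fderiv).hasSum hz'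
  rw [zero_add] at hd0
  have hd1 : HasSum (fun n : ℕ => (p.derivSeries n fun _ => z) z) (fderiv ℂ h z z) := by
    have := (ContinuousLinearMap.apply ℂ ℂ z).hasSum hd0
    exact this
  have hterm : ∀ n : ℕ, (p.derivSeries n fun _ => z) z
      = ((n:ℂ) + 1) * (a (n + 1) * z ^ (n + 1)) := by
    intro n
    rw [FormalMultilinearSeries.derivSeries_apply_diag, happ, nsmul_eq_mul]
    push_cast
    ring
  have hfd : fderiv ℂ h z z = z * deriv h z := by
    have h2 := (fderiv ℂ h z).map_smul z (1:ℂ)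
    rw [smul_eq_mul, mul_one, smul_eq_mul] at h2
    rw [h2, deriv]
  have hd2 : HasSum (fun n : ℕ => ((n:ℂ) + 1) * (a (n + 1) * z ^ (n + 1))) (z * deriv h z) := by
    rw [← hfd]
    simpa only [hterm] using hd1
  have hshift : HasSum (fun n : ℕ => a (n + 1) * z ^ (n + 1)) (h z) := by
    refine (hasSum_nat_add_iff (f := fun n : ℕ => a n * z ^ n) 1).mpr ?_
    rw [Finset.sum_range_one, ha0, zero_mul, add_zero]
    exact hh z hz
  have H := ((hshift.mul_left ((1:ℂ) - α)).add (hd2.mul_left (α:ℂ))).div_const z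
  have hval : ((1 - (α:ℂ)) * h z + (α:ℂ) * (z * deriv h z)) / z
      = (1 - (α:ℂ)) * (h z / z) + (α:ℂ) * deriv h z := by
    field_simp
  rw [hval] at H
  have hfun : (fun m : ℕ => ((1 : ℂ) + m * α) * a (m + 1) * z ^ m)
      = fun m : ℕ => ((1 - (α:ℂ)) * (a (m + 1) * z ^ (m + 1))
          + (α:ℂ) * (((m:ℂ) + 1) * (a (m + 1) * z ^ (m + 1)))) / z := by
    funext m
    have hzp : z ^ (m + 1) = z ^ m * z := by ring
    rw [hzp]
    field_simp
    ring
  rw [hfun]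
  exact H

private lemma nat_not_dvd_of_ne {N q : ℕ} (h0 : 0 < q) (h2 : q < 2 * N) (hne : q ≠ N) :
    ¬ N ∣ q := by
  rintro ⟨k, rfl⟩
  match k with
  | 0 => omega
  | 1 => omega
  | (k + 2) =>
    have : 2 * N ≤ N * (k + 2) := by
      calc 2 * N = N * 2 := by ring
        _ ≤ N * (k + 2) := Nat.mul_le_mul_left N (by omega)
    omega

private lemma cara {c : ℕ → ℂ} {F : ℂ → ℂ} (hc0 : c 0 = 1)
    (hsum : ∀ z : ℂ, ‖z‖ < 1 → z ≠ 0 → HasSum (fun m : ℕ => c m * z ^ m) (F z))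
    (hre : ∀ z : ℂ, ‖z‖ < 1 → z ≠ 0 → 0 ≤ (F z).re) :
    ∀ n : ℕ, 1 ≤ n → ‖c n‖ ≤ 2 := by
  intro n hn
  have key : ∀ u : ℂ, ‖u‖ = 1 → ∀ r : ℝ, 0 < r → r < 1 →
      0 ≤ 1 + r ^ n / 2 * (c n * u).re := by
    intro u hu r hr0 hr1
    have habs : Summable fun m : ℕ => ‖c m‖ * r ^ m := by
      refine summable_aux (r' := (1 + r)/2) ?_ hr0.le (by linarith)
      refine (hsum _ ?_ ?_).summable
      · rw [Complex.norm_real, Real.norm_of_nonneg (by positivity)]; linarith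
      · exact Complex.ofReal_ne_zero.mpr (by positivity)
    set t : ℕ → ℝ := fun M => ∑' m : ℕ, ‖c (m + M)‖ * r ^ (m + M) with ht
    have htendt : Filter.Tendsto t Filter.atTop (nhds 0) :=
      tendsto_sum_nat_add (fun m => ‖c m‖ * r ^ m)
    have htend : Filter.Tendsto (fun N : ℕ => -(2 * t (N - n))) Filter.atTop (nhds 0) := by
      have h2 := ((htendt.comp (Filter.tendsto_sub_atTop_nat n)).const_mul (2:ℝ)).neg
      simpa using h2
    have core : ∀ N : ℕ, 2 * n < N → -(2 * t (N - n)) ≤ 1 + r ^ n / 2 * (c n * u).re := by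
      intro N hN
      have hNn : n < N := by omega
      have hN0 : N ≠ 0 := by omega
      set M : ℕ := N - n with hMdef
      have hMn : M + n = N := by omega
      have hnM : n < M := by omega
      have hM0 : 0 < M := by omega
      set ζ : ℂ := Complex.exp (2 * Real.pi * Complex.I / N) with hζdef
      have hζ : IsPrimitiveRoot ζ N := Complex.isPrimitiveRoot_exp N hN0
      have hζN : ζ ^ N = 1 := hζ.pow_eq_one
      have hζnorm : ‖ζ‖ = 1 := Complex.norm_eq_one_of_pow_eq_one hζN hN0
      have hζ0 : ζ ≠ 0 := hζ.ne_zero hN0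
      set T : ℕ → ℂ := fun q => ∑ j ∈ Finset.range N, (ζ ^ q) ^ j with hT
      have hT1 : ∀ q : ℕ, N ∣ q → T q = N := by
        intro q hq
        have h1 : ζ ^ q = 1 := (hζ.pow_eq_one_iff_dvd q).mpr hq
        simp [hT, h1]
      have hT0 : ∀ q : ℕ, ¬ N ∣ q → T q = 0 := by
        intro q hq
        have hne : ζ ^ q ≠ 1 := fun e => hq ((hζ.pow_eq_one_iff_dvd q).mp e)
        have hpow : (ζ ^ q) ^ N = 1 := by
          rw [← pow_mul, mul_comm, pow_mul, hζN, one_pow]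
        simp only [hT]
        rw [geom_sum_eq hne, hpow, sub_self, zero_div]
      have hTbound : ∀ q, ‖T q‖ ≤ N := by
        intro q
        calc ‖T q‖ ≤ ∑ j ∈ Finset.range N, ‖(ζ ^ q) ^ j‖ := norm_sum_le _ _
          _ = ∑ _j ∈ Finset.range N, (1:ℝ) := by
              refine Finset.sum_congr rfl fun j _ => ?_
              rw [norm_pow, norm_pow, hζnorm, one_pow, one_pow]
          _ = N := by simp
      set w : ℕ → ℝ := fun j => 1 + (u * ζ ^ (M * j)).re with hw
      have hunit : ∀ j, ‖u * ζ ^ (M * j)‖ = 1 := fun j => by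
        rw [norm_mul, hu, norm_pow, hζnorm, one_pow, mul_one]
      have habsre : ∀ j, |(u * ζ ^ (M * j)).re| ≤ 1 := by
        intro j
        rw [← hunit j]
        exact Complex.abs_re_le_norm _
      have hw0 : ∀ j, 0 ≤ w j := by
        intro j
        have := (abs_le.mp (habsre j)).1
        simp only [hw]; linarith
      have hw2 : ∀ j, w j ≤ 2 := by
        intro j
        have := (abs_le.mp (habsre j)).2
        simp only [hw]; linarith
      have hconjz : ∀ j : ℕ, (starRingEnd ℂ) (ζ ^ (M * j)) = ζ ^ (n * j) := by
        intro j
        have hmod : ζ ^ (M * j) * ζ ^ (n * j) = 1 := by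
          rw [← pow_add, ← add_mul, hMn, pow_mul, hζN, one_pow]
        have habs1 : ‖ζ ^ (M * j)‖ = 1 := by rw [norm_pow, hζnorm, one_pow]
        rw [← Complex.inv_eq_conj habs1]
        exact inv_eq_of_mul_eq_one_right hmod
      have hwC : ∀ j : ℕ, ((w j : ℝ) : ℂ)
          = 1 + (u * ζ ^ (M * j) + (starRingEnd ℂ) u * ζ ^ (n * j)) / 2 := by
        intro j
        have h1 : ((((u * ζ ^ (M * j)).re : ℝ)) : ℂ)
            = (u * ζ ^ (M * j) + (starRingEnd ℂ) (u * ζ ^ (M * j))) / 2 := by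
          rw [Complex.add_conj]; push_cast; ring
        simp only [hw]
        push_cast
        rw [h1, map_mul, hconjz j]
      set K : ℕ → ℂ := fun m => T m + u / 2 * T (M + m) + (starRingEnd ℂ) u / 2 * T (n + m)
        with hK
      have hzmem : ∀ j : ℕ, ‖(r : ℂ) * ζ ^ j‖ < 1 := by
        intro j
        rw [norm_mul, Complex.norm_real, Real.norm_of_nonneg hr0.le, norm_pow, hζnorm,
          one_pow, mul_one]
        exact hr1
      have hzne : ∀ j : ℕ, (r : ℂ) * ζ ^ j ≠ 0 :=
        fun j => mul_ne_zero (Complex.ofReal_ne_zero.mpr hr0.ne') (pow_ne_zero _ hζ0)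
      set S : ℂ := ∑ j ∈ Finset.range N, (w j : ℂ) * F ((r:ℂ) * ζ ^ j) with hS
      have hSre : 0 ≤ S.re := by
        rw [hS, Complex.re_sum]
        refine Finset.sum_nonneg fun j _ => ?_
        rw [Complex.re_ofReal_mul]
        exact mul_nonneg (hw0 j) (hre _ (hzmem j) (hzne j))
      set f : ℕ → ℂ := fun m => c m * (r:ℂ) ^ m * K m with hf
      have heq : ∀ m : ℕ, (∑ j ∈ Finset.range N, (w j : ℂ) * (c m * ((r:ℂ) * ζ ^ j) ^ m))
          = f m := by
        intro m
        have hstep : ∀ j ∈ Finset.range N, (w j : ℂ) * (c m * ((r:ℂ) * ζ ^ j) ^ m)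
            = c m * (r:ℂ) ^ m * ((ζ ^ m) ^ j + u / 2 * (ζ ^ (M + m)) ^ j
                + (starRingEnd ℂ) u / 2 * (ζ ^ (n + m)) ^ j) := by
          intro j _
          rw [hwC j, mul_pow]
          simp only [pow_add, mul_pow, pow_mul]
          ring
        rw [Finset.sum_congr rfl hstep, ← Finset.mul_sum]
        simp only [hf, hK, hT]
        rw [Finset.sum_add_distrib, Finset.sum_add_distrib, ← Finset.mul_sum, ← Finset.mul_sum]
      have hFS : HasSum f S := by
        have hj : ∀ j ∈ Finset.range N,
            HasSum (fun m : ℕ => (w j : ℂ) * (c m * ((r:ℂ) * ζ ^ j) ^ m))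
              ((w j : ℂ) * F ((r:ℂ) * ζ ^ j)) :=
          fun j _ => (hsum _ (hzmem j) (hzne j)).mul_left _
        have h2 := hasSum_sum hj
        rw [← hS] at h2
        simpa only [heq] using h2
      have hK0 : K 0 = N := by
        have h1 : T 0 = N := hT1 0 (dvd_zero N)
        have h2 : T (M + 0) = 0 := hT0 _ (nat_not_dvd_of_ne (by omega) (by omega) (by omega))
        have h3 : T (n + 0) = 0 := hT0 _ (nat_not_dvd_of_ne (by omega) (by omega) (by omega))
        simp only [hK]
        rw [h1, h2, h3, mul_zero, mul_zero, add_zero, add_zero]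
      have hKn : K n = u / 2 * N := by
        have h1 : T n = 0 := hT0 _ (nat_not_dvd_of_ne (by omega) (by omega) (by omega))
        have h2 : T (M + n) = N := hT1 _ (by rw [hMn])
        have h3 : T (n + n) = 0 := hT0 _ (nat_not_dvd_of_ne (by omega) (by omega) (by omega))
        simp only [hK]
        rw [h1, h2, h3, mul_zero, add_zero, zero_add]
      have hKzero : ∀ m : ℕ, m < M → m ≠ 0 → m ≠ n → K m = 0 := by
        intro m hm h0 hn'
        have h1 : T m = 0 := hT0 _ (nat_not_dvd_of_ne (by omega) (by omega) (by omega))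
        have h2 : T (M + m) = 0 := hT0 _ (nat_not_dvd_of_ne (by omega) (by omega) (by omega))
        have h3 : T (n + m) = 0 := hT0 _ (nat_not_dvd_of_ne (by omega) (by omega) (by omega))
        simp only [hK]
        rw [h1, h2, h3, mul_zero, mul_zero, add_zero, add_zero]
      have hKbound : ∀ m : ℕ, ‖K m‖ ≤ 2 * N := by
        intro m
        have e1 : ‖u / 2 * T (M + m)‖ ≤ (N:ℝ) / 2 := by
          rw [norm_mul, norm_div, hu]
          have := hTbound (M + m)
          rw [div_mul_eq_mul_div, one_mul]
          have h2 : ‖(2:ℂ)‖ = 2 := by norm_num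
          rw [h2]
          linarith
        have e2 : ‖(starRingEnd ℂ) u / 2 * T (n + m)‖ ≤ (N:ℝ) / 2 := by
          rw [norm_mul, norm_div, RCLike.norm_conj, hu]
          have := hTbound (n + m)
          rw [div_mul_eq_mul_div, one_mul]
          have h2 : ‖(2:ℂ)‖ = 2 := by norm_num
          rw [h2]
          linarith
        calc ‖K m‖ ≤ ‖T m + u / 2 * T (M + m)‖ + ‖(starRingEnd ℂ) u / 2 * T (n + m)‖ :=
              norm_add_le _ _
          _ ≤ (‖T m‖ + ‖u / 2 * T (M + m)‖) + ‖(starRingEnd ℂ) u / 2 * T (n + m)‖ := by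
              have := norm_add_le (T m) (u / 2 * T (M + m)); linarith
          _ ≤ (N + N / 2) + N / 2 := by
              have := hTbound m; linarith
          _ = 2 * N := by ring
      have hsplit : ∑ m ∈ Finset.range M, f m = f 0 + f n := by
        have hsub : ({0, n} : Finset ℕ) ⊆ Finset.range M := by
          intro x hx
          simp only [Finset.mem_insert, Finset.mem_singleton] at hx
          rcases hx with rfl | rfl <;> (rw [Finset.mem_range]; omega)
        rw [← Finset.sum_subset hsub ?_]
        · rw [Finset.sum_pair (by omega : (0:ℕ) ≠ n)]
        · intro x hx hnx
          simp only [Finset.mem_insert, Finset.mem_singleton] at hnx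
          push_neg at hnx
          simp only [hf]
          rw [hKzero x (Finset.mem_range.mp hx) hnx.1 hnx.2, mul_zero]
      have htail : HasSum (fun m => f (m + M)) (S - (f 0 + f n)) := by
        refine (hasSum_nat_add_iff (f := f) M).mpr ?_
        rw [hsplit, sub_add_cancel]
        exact hFS
      have hsummand : ∀ m : ℕ, ‖f (m + M)‖ ≤ 2 * N * (‖c (m + M)‖ * r ^ (m + M)) := by
        intro m
        simp only [hf]
        rw [norm_mul, norm_mul, norm_pow, Complex.norm_real, Real.norm_of_nonneg hr0.le]
        calc ‖c (m+M)‖ * r ^ (m+M) * ‖K (m+M)‖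
            ≤ ‖c (m+M)‖ * r ^ (m+M) * (2*N) :=
              mul_le_mul_of_nonneg_left (hKbound _) (by positivity)
          _ = 2 * N * (‖c (m+M)‖ * r ^ (m+M)) := by ring
      have hmaj : Summable fun m : ℕ => 2 * (N:ℝ) * (‖c (m + M)‖ * r ^ (m + M)) := by
        have := (summable_nat_add_iff (f := fun m : ℕ => ‖c m‖ * r ^ m) M).mpr habs
        exact this.mul_left _
      have hfs : Summable fun m : ℕ => ‖f (m + M)‖ :=
        Summable.of_nonneg_of_le (fun _ => norm_nonneg _) hsummand hmaj
      have htailnorm : ‖S - (f 0 + f n)‖ ≤ 2 * N * t M := by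
        calc ‖S - (f 0 + f n)‖ = ‖∑' m, f (m + M)‖ := by rw [htail.tsum_eq]
          _ ≤ ∑' m, ‖f (m + M)‖ := norm_tsum_le_tsum_norm hfs
          _ ≤ ∑' m, 2 * (N:ℝ) * (‖c (m + M)‖ * r ^ (m + M)) := Summable.tsum_le_tsum hsummand hfs hmaj
          _ = 2 * N * t M := by rw [ht]; exact tsum_mul_left
      have hX : f 0 + f n = ((N:ℝ) : ℂ) * (1 + ((r ^ n / 2 : ℝ) : ℂ) * (c n * u)) := by
        have hf0 : f 0 = (N : ℂ) := by
          simp only [hf]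
          rw [hc0, hK0]
          simp
        have hfn : f n = c n * (r:ℂ) ^ n * (u / 2 * N) := by
          simp only [hf]
          rw [hKn]
        rw [hf0, hfn]
        push_cast
        ring
      have hXre : (f 0 + f n).re = N * (1 + r ^ n / 2 * (c n * u).re) := by
        rw [hX, Complex.re_ofReal_mul, Complex.add_re, Complex.one_re,
          Complex.re_ofReal_mul]
      have hmain : -(2 * N * t M) ≤ (f 0 + f n).re := by
        have h1 : S.re - (f 0 + f n).re ≤ ‖S - (f 0 + f n)‖ := by
          have h2 : (S - (f 0 + f n)).re = S.re - (f 0 + f n).re := by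
            rw [Complex.sub_re]
          rw [← h2]
          calc (S - (f 0 + f n)).re ≤ |(S - (f 0 + f n)).re| := le_abs_self _
            _ ≤ ‖S - (f 0 + f n)‖ := Complex.abs_re_le_norm _
            _ = ‖S - (f 0 + f n)‖ := rfl
        linarith
      rw [hXre] at hmain
      have hNpos : (0:ℝ) < N := by
        have : 0 < N := by omega
        exact_mod_cast this
      have h2 : (N:ℝ) * (-(2 * t M)) ≤ N * (1 + r ^ n / 2 * (c n * u).re) := by
        calc (N:ℝ) * (-(2 * t M)) = -(2 * N * t M) := by ring
          _ ≤ _ := hmain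
      have h3 := (mul_le_mul_iff_right₀ hNpos).mp h2
      simpa only [hMdef] using h3
    refine le_of_tendsto htend ?_
    filter_upwards [Filter.eventually_gt_atTop (2*n)] with N hN using core N hN
  by_cases hc : c n = 0
  · rw [hc, norm_zero]; norm_num
  · have hcn0 : (0:ℝ) < ‖c n‖ := norm_pos_iff.mpr hc
    set u : ℂ := -((starRingEnd ℂ) (c n)) / (‖c n‖ : ℝ) with hu_def
    have hu : ‖u‖ = 1 := by
      rw [hu_def, norm_div, norm_neg, RCLike.norm_conj, Complex.norm_real,
        Real.norm_of_nonneg hcn0.le, div_self hcn0.ne']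
    have hre' : (c n * u).re = -‖c n‖ := by
      have h1 : c n * u = ((-‖c n‖ : ℝ) : ℂ) := by
        rw [hu_def]
        rw [mul_div_assoc']
        rw [mul_neg, Complex.mul_conj, Complex.normSq_eq_norm_sq]
        push_cast
        rw [neg_div]
        congr 1
        rw [pow_two, mul_div_assoc, div_self (by exact_mod_cast hcn0.ne'), mul_one]
      rw [h1, Complex.ofReal_re]
    have hineq : ∀ r : ℝ, 0 < r → r < 1 → ‖c n‖ ≤ 2 / r ^ n := by
      intro r h0 h1
      have hk := key u hu r h0 h1
      rw [hre'] at hk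
      have hrpow : 0 < r ^ n := pow_pos h0 n
      rw [le_div_iff₀ hrpow]
      nlinarith
    have hlim : Filter.Tendsto (fun r : ℝ => 2 / r ^ n)
        (nhdsWithin 1 (Set.Iio 1)) (nhds 2) := by
      have h2 : Filter.Tendsto (fun r : ℝ => 2 / r ^ n) (nhds 1) (nhds (2 / 1 ^ n)) :=
        Filter.Tendsto.div tendsto_const_nhds ((continuous_pow n).tendsto 1) (by norm_num)
      simpa using h2.mono_left nhdsWithin_le_nhds
    refine ge_of_tendsto hlim ?_
    have hpos : ∀ᶠ r : ℝ in nhdsWithin 1 (Set.Iio 1), 0 < r :=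
      eventually_nhdsWithin_of_eventually_nhds (eventually_gt_nhds (by norm_num))
    filter_upwards [hpos, self_mem_nhdsWithin] with r h0 h1
    exact hineq r h0 h1

private lemma coeff_bound
    (k : ℕ) (hk : 1 ≤ k) (α : ℝ) (hα : 0 ≤ α)
    (h g : ℂ → ℂ) (a b : ℕ → ℂ)
    (ha0 : a 0 = 0) (ha1 : a 1 = 1)
    (hbk : ∀ n : ℕ, n ≤ k → b n = 0)
    (hh : ∀ z ∈ Metric.ball (0:ℂ) 1, HasSum (fun n : ℕ => a n * z ^ n) (h z))
    (hg : ∀ z ∈ Metric.ball (0:ℂ) 1, HasSum (fun n : ℕ => b n * z ^ n) (g z))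
    (hmem : ∀ z ∈ Metric.ball (0:ℂ) 1, z ≠ 0 →
      ‖(1 - (α:ℂ)) * (g z / z) + (α:ℂ) * deriv g z‖
        < ((1 - (α:ℂ)) * (h z / z) + (α:ℂ) * deriv h z).re) :
    ∀ ε : ℂ, ‖ε‖ ≤ 1 → ∀ n : ℕ, k + 1 ≤ n →
      ‖a n + ε * b n‖ ≤ 2 / (1 + ((n:ℝ) - 1) * α) := by
  intro ε hε n hn
  have hb0 : b 0 = 0 := hbk 0 (by omega)
  set c' : ℕ → ℂ := fun m => ((1:ℂ) + m * α) * (a (m+1) + ε * b (m+1)) with hc'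
  set Fε : ℂ → ℂ := fun z => ((1 - (α:ℂ)) * (h z / z) + (α:ℂ) * deriv h z)
      + ε * ((1 - (α:ℂ)) * (g z / z) + (α:ℂ) * deriv g z) with hFε
  have hsum' : ∀ z : ℂ, ‖z‖ < 1 → z ≠ 0 → HasSum (fun m : ℕ => c' m * z ^ m) (Fε z) := by
    intro z hz1 hz0
    have hzball : z ∈ Metric.ball (0:ℂ) 1 := by
      rw [Metric.mem_ball, dist_zero_right]; exact hz1
    have Hh := hasSum_combo (α := α) ha0 hh hzball hz0
    have Hg := hasSum_combo (α := α) hb0 hg hzball hz0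
    have H := Hh.add (Hg.mul_left ε)
    have hfun : ∀ m : ℕ, ((1:ℂ) + m * α) * a (m+1) * z ^ m
        + ε * (((1:ℂ) + m * α) * b (m+1) * z ^ m) = c' m * z ^ m := by
      intro m; simp only [hc']; ring
    simpa only [hfun] using H
  have hre' : ∀ z : ℂ, ‖z‖ < 1 → z ≠ 0 → 0 ≤ (Fε z).re := by
    intro z hz1 hz0
    have hzball : z ∈ Metric.ball (0:ℂ) 1 := by
      rw [Metric.mem_ball, dist_zero_right]; exact hz1
    have hm := hmem z hzball hz0
    set A : ℂ := (1 - (α:ℂ)) * (h z / z) + (α:ℂ) * deriv h z with hA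
    set B : ℂ := (1 - (α:ℂ)) * (g z / z) + (α:ℂ) * deriv g z with hB
    have heq : Fε z = A + ε * B := rfl
    have h2 : ‖ε * B‖ ≤ ‖B‖ := by
      rw [norm_mul]
      exact mul_le_of_le_one_left (norm_nonneg _) hε
    have h3 : -‖ε * B‖ ≤ (ε * B).re := by
      have := (abs_le.mp (Complex.abs_re_le_norm (ε * B))).1
      linarith
    have h4 : ‖B‖ = ‖B‖ := rfl
    rw [heq, Complex.add_re]
    linarith
  have hc0' : c' 0 = 1 := by
    simp only [hc']
    rw [ha1, hbk 1 hk]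
    push_cast
    ring
  have hm1 : 1 ≤ n - 1 := by omega
  have hcb := cara hc0' hsum' hre' (n - 1) hm1
  have hn1 : n - 1 + 1 = n := by omega
  have hval : c' (n - 1) = ((1:ℂ) + (↑(n-1) : ℕ) * α) * (a n + ε * b n) := by
    simp only [hc', hn1]
  have hcast : ((1:ℂ) + (↑(n-1) : ℕ) * α) = (((1 + ((n:ℝ) - 1) * α) : ℝ) : ℂ) := by
    push_cast [Nat.cast_sub (by omega : 1 ≤ n)]
    ring
  have hpos : (0:ℝ) < 1 + ((n:ℝ) - 1) * α := by
    have h5 : (0:ℝ) ≤ ((n:ℝ) - 1) := by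
      have : (1:ℝ) ≤ (n:ℝ) := by exact_mod_cast (by omega : 1 ≤ n)
      linarith
    nlinarith
  have hnorm : ‖c' (n - 1)‖ = (1 + ((n:ℝ) - 1) * α) * ‖a n + ε * b n‖ := by
    rw [hval, hcast, norm_mul, Complex.norm_real, Real.norm_of_nonneg hpos.le]
  rw [hnorm] at hcb
  rw [le_div_iff₀' hpos]
  exact hcb


/- Coefficient bounds for G^k_H(α), k ≥ 1, α ≥ 0: for n ≥ k+1,
   |a_n| + |b_n| ≤ 2/(1+(n-1)α), ||a_n| - |b_n|| ≤ 2/(1+(n-1)α),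
   |a_n| ≤ 2/(1+(n-1)α). -/
theorem stmt_13
    (k : ℕ) (hk : 1 ≤ k) (α : ℝ) (hα : 0 ≤ α)
    (h g : ℂ → ℂ) (a b : ℕ → ℂ)
    (ha0 : a 0 = 0) (ha1 : a 1 = 1)
    (hak : ∀ n : ℕ, 2 ≤ n → n ≤ k → a n = 0)
    (hbk : ∀ n : ℕ, n ≤ k → b n = 0)
    (hh : ∀ z ∈ Metric.ball (0:ℂ) 1, HasSum (fun n : ℕ => a n * z ^ n) (h z))
    (hg : ∀ z ∈ Metric.ball (0:ℂ) 1, HasSum (fun n : ℕ => b n * z ^ n) (g z))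
    (hmem : ∀ z ∈ Metric.ball (0:ℂ) 1, z ≠ 0 →
      ‖(1 - (α:ℂ)) * (g z / z) + (α:ℂ) * deriv g z‖
        < ((1 - (α:ℂ)) * (h z / z) + (α:ℂ) * deriv h z).re) :
    ∀ n : ℕ, k + 1 ≤ n →
      ‖a n‖ + ‖b n‖ ≤ 2 / (1 + ((n:ℝ) - 1) * α) ∧
      |‖a n‖ - ‖b n‖| ≤ 2 / (1 + ((n:ℝ) - 1) * α) ∧
      ‖a n‖ ≤ 2 / (1 + ((n:ℝ) - 1) * α) := by
  intro n hn
  have hbound := coeff_bound k hk α hα h g a b ha0 ha1 hbk hh hg hmem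
  have hmain : ‖a n‖ + ‖b n‖ ≤ 2 / (1 + ((n:ℝ) - 1) * α) := by
    by_cases hab : a n = 0 ∨ b n = 0
    · rcases hab with h0 | h0
      · have := hbound 1 (by norm_num) n hn
        rw [h0, one_mul, zero_add] at this
        rw [h0, norm_zero, zero_add]
        exact this
      · have := hbound 1 (by norm_num) n hn
        rw [h0, mul_zero, add_zero] at this
        rw [h0, norm_zero, add_zero]
        exact this
    · push_neg at hab
      obtain ⟨ha', hb'⟩ := hab
      set ε : ℂ := (a n * (starRingEnd ℂ) (b n)) / ((‖a n‖ : ℝ) * (‖b n‖ : ℝ)) with hεdef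
      have hna : (0:ℝ) < ‖a n‖ := norm_pos_iff.mpr ha'
      have hnb : (0:ℝ) < ‖b n‖ := norm_pos_iff.mpr hb'
      have hε1 : ‖ε‖ = 1 := by
        rw [hεdef, norm_div, norm_mul, RCLike.norm_conj, norm_mul, Complex.norm_real,
          Complex.norm_real, Real.norm_of_nonneg hna.le, Real.norm_of_nonneg hnb.le,
          div_self (by positivity)]
      have hane : ((‖a n‖ : ℝ) : ℂ) ≠ 0 := Complex.ofReal_ne_zero.mpr hna.ne'
      have hbne : ((‖b n‖ : ℝ) : ℂ) ≠ 0 := Complex.ofReal_ne_zero.mpr hnb.ne'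
      have hbb : (starRingEnd ℂ) (b n) * b n = ((‖b n‖ ^ 2 : ℝ) : ℂ) := by
        rw [mul_comm, Complex.mul_conj, Complex.normSq_eq_norm_sq]
      have h5 : ε * b n = a n * ((‖b n‖ : ℝ) / (‖a n‖ : ℝ) : ℂ) := by
        rw [hεdef, div_mul_eq_mul_div, mul_assoc, hbb,
          show ((‖b n‖ ^ 2 : ℝ) : ℂ) = (‖b n‖ : ℝ) * ((‖b n‖ : ℝ) : ℂ) from by push_cast; ring,
          mul_div_assoc]
        congr 1
        rw [div_eq_div_iff (mul_ne_zero hane hbne) hane]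
        ring
      have hcomb : a n + ε * b n = a n * (1 + (‖b n‖ : ℝ) / (‖a n‖ : ℝ)) := by
        rw [h5]; ring
      have hnormcomb : ‖a n + ε * b n‖ = ‖a n‖ + ‖b n‖ := by
        rw [hcomb, norm_mul]
        have h1 : ((1:ℂ) + (‖b n‖ : ℝ) / (‖a n‖ : ℝ)) = (((1 + ‖b n‖ / ‖a n‖ : ℝ)) : ℂ) := by
          push_cast
          ring
        rw [h1, Complex.norm_real, Real.norm_of_nonneg (by positivity)]
        have h6 : ‖a n‖ * (‖b n‖ / ‖a n‖) = ‖b n‖ := by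
          rw [← mul_div_assoc, mul_comm, mul_div_assoc, div_self hna.ne', mul_one]
        rw [mul_add, mul_one, h6]
      have := hbound ε hε1.le n hn
      rw [hnormcomb] at this
      exact this
  refine ⟨hmain, ?_, ?_⟩
  · have h1 : (0:ℝ) ≤ ‖a n‖ := norm_nonneg _
    have h2 : (0:ℝ) ≤ ‖b n‖ := norm_nonneg _
    rw [abs_le]
    constructor <;> nlinarith
  · have h2 : (0:ℝ) ≤ ‖b n‖ := norm_nonneg _
    linarith
end
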